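/- arXiv:2302.02397 — 6 statements merged into one kernel-verified Lean document; each statement's English description precedes it below -/
import Mathlib

section
/- Let γ ∈ (0,1] and b ∈ (0, r^i), and let (C,S) be the solution of the unperturbed system with C(0) = b, S(0) = 0. Set a = γ + (b² − 1)² and S₋(u) = (1 − γ^{−1/2}(a − (u−1)²)^{1/2})^{1/2}. Then (C,S) is periodic, and its minimal period ω is given by ω = 4 ∫₀^b (γ(S₋(c²) − S₋(c²)³))^{−1} dc, the (possibly improper at c = b) integral being finite. -/
set_option maxHeartbeats 4000000

open Set

lemma cube_lip {y z : ℝ} (hy : |y| ≤ 1) (hz : |z| ≤ 1) :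
    |(y^3 - y) - (z^3 - z)| ≤ 4 * |y - z| := by
  have h : (y^3 - y) - (z^3 - z) = (y - z) * (y^2 + y*z + z^2 - 1) := by ring
  rw [h, abs_mul]
  have h2 : |y^2 + y*z + z^2 - 1| ≤ 4 := by
    rw [abs_le] at hy hz ⊢
    constructor <;> nlinarith [hy.1, hy.2, hz.1, hz.2]
  calc |y - z| * |y^2 + y*z + z^2 - 1| ≤ |y - z| * 4 := by
        exact mul_le_mul_of_nonneg_left h2 (abs_nonneg _)
    _ = 4 * |y - z| := by ring


/-- `S₋(u) = (1 − γ^{−1/2}(a − (u−1)²)^{1/2})^{1/2}` with `a = γ + (b²−1)²`. -/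
noncomputable def SminusInner (γ b u : ℝ) : ℝ :=
  Real.sqrt (1 - (Real.sqrt γ)⁻¹ * Real.sqrt ((γ + (b ^ 2 - 1) ^ 2) - (u - 1) ^ 2))

/-- the solution of the unperturbed system through `(b,0)` with
`b ∈ (0, r^i)` is periodic and its minimal period is
`ω = 4 ∫₀^b (γ(S₋(c²) − S₋(c²)³))⁻¹ dc`, the improper integral being finite. -/
theorem period_formula_class0_inner
    (γ : ℝ) (hγ : γ ∈ Set.Ioc (0 : ℝ) 1)
    (b : ℝ) (hb : b ∈ Set.Ioo 0 (Real.sqrt (1 - Real.sqrt (1 - γ))))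
    (C S : ℝ → ℝ)
    (hC : ∀ φ : ℝ, HasDerivAt C (γ * (S φ ^ 3 - S φ)) φ)
    (hS : ∀ φ : ℝ, HasDerivAt S (-(C φ ^ 3 - C φ)) φ)
    (hC0 : C 0 = b) (hS0 : S 0 = 0) :
    ∃ ω : ℝ, 0 < ω ∧
      (∀ φ : ℝ, C (φ + ω) = C φ ∧ S (φ + ω) = S φ) ∧
      (∀ ω' : ℝ, 0 < ω' → (∀ φ : ℝ, C (φ + ω') = C φ ∧ S (φ + ω') = S φ) → ω ≤ ω') ∧
      MeasureTheory.IntegrableOn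
        (fun c : ℝ => (γ * (SminusInner γ b (c ^ 2) - SminusInner γ b (c ^ 2) ^ 3))⁻¹)
        (Set.Ioo 0 b) ∧
      ω = 4 * ∫ c in Set.Ioo 0 b,
            (γ * (SminusInner γ b (c ^ 2) - SminusInner γ b (c ^ 2) ^ 3))⁻¹ := by
  obtain ⟨hγ0, hγ1⟩ := hγ
  obtain ⟨hb0, hbu⟩ := hb
  -- basic bounds
  have hsg : Real.sqrt (1 - γ) ≤ 1 := by
    calc Real.sqrt (1-γ) ≤ Real.sqrt 1 := Real.sqrt_le_sqrt (by linarith)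
      _ = 1 := Real.sqrt_one
  have hb2lt : b^2 < 1 - Real.sqrt (1 - γ) := by
    have := Real.sq_sqrt (by linarith : (0:ℝ) ≤ 1 - Real.sqrt (1 - γ))
    calc b^2 < (Real.sqrt (1 - Real.sqrt (1-γ)))^2 := by
          apply sq_lt_sq' (by linarith [Real.sqrt_nonneg (1 - Real.sqrt (1-γ))]) hbu
      _ = 1 - Real.sqrt (1-γ) := this
  have hb1 : b < 1 := by nlinarith [Real.sqrt_nonneg (1-γ), hb0]
  have hb2pos : 0 < b^2 := by positivity
  have hb21 : b^2 < 1 := by nlinarith [Real.sqrt_nonneg (1-γ)]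
  set a : ℝ := γ + (b^2-1)^2 with ha
  have ha1 : 1 < a := by
    have h1 : Real.sqrt (1-γ) < 1 - b^2 := by linarith
    have h2 : (Real.sqrt (1-γ))^2 = 1 - γ := Real.sq_sqrt (by linarith)
    nlinarith [Real.sqrt_nonneg (1-γ)]
  have haγ : a < 1 + γ := by nlinarith
  have haγ' : γ < a := by nlinarith
  -- continuity
  have contC : Continuous C := by
    rw [continuous_iff_continuousAt]; exact fun x => (hC x).continuousAt
  have contS : Continuous S := by
    rw [continuous_iff_continuousAt]; exact fun x => (hS x).continuousAt
  -- energy conservation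
  have hE : ∀ φ : ℝ, (C φ^2 - 1)^2 + γ * (S φ^2 - 1)^2 = a := by
    have hD : ∀ φ : ℝ, HasDerivAt (fun t => (C t^2 - 1)^2 + γ * (S t^2 - 1)^2) 0 φ := by
      intro φ
      have h1 : HasDerivAt (fun t => (C t^2 - 1)^2)
          (2 * (C φ^2 - 1)^(2-1) * (2 * C φ^(2-1) * (γ * (S φ ^ 3 - S φ)))) φ :=
        (((hC φ).pow 2).sub_const 1).pow 2
      have h2 : HasDerivAt (fun t => γ * (S t^2 - 1)^2)
          (γ * (2 * (S φ^2 - 1)^(2-1) * (2 * S φ^(2-1) * (-(C φ ^ 3 - C φ))))) φ :=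
        ((((hS φ).pow 2).sub_const 1).pow 2).const_mul γ
      have h3 := h1.add h2
      exact h3.congr_deriv (by ring)
    have hconst : ∀ φ : ℝ, (fun t => (C t^2 - 1)^2 + γ * (S t^2 - 1)^2) φ
        = (fun t => (C t^2 - 1)^2 + γ * (S t^2 - 1)^2) 0 := by
      intro φ
      apply is_const_of_deriv_eq_zero (fun x => (hD x).differentiableAt)
      intro x; exact (hD x).deriv
    intro φ
    have := hconst φ
    simp only [hC0, hS0] at this
    rw [this]; ring
  -- box invariant
  have key : ∀ φ : ℝ, C φ^2 < 1 ∧ S φ^2 < 1 := by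
    have hBeq : {φ : ℝ | C φ^2 < 1 ∧ S φ^2 < 1} = {φ : ℝ | C φ^2 ≤ 1 ∧ S φ^2 ≤ 1} := by
      ext φ
      simp only [mem_setOf_eq]
      constructor
      · rintro ⟨h1, h2⟩; exact ⟨h1.le, h2.le⟩
      · rintro ⟨h1, h2⟩
        have hEφ := hE φ
        have hs1 : (S φ^2 - 1)^2 ≤ 1 := by nlinarith [sq_nonneg (S φ)]
        have hc1 : (C φ^2 - 1)^2 ≤ 1 := by nlinarith [sq_nonneg (C φ)]
        constructor
        · rcases lt_or_eq_of_le h1 with h | h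
          · exact h
          · exfalso; nlinarith
        · rcases lt_or_eq_of_le h2 with h | h
          · exact h
          · exfalso; nlinarith
    have hBopen : IsOpen {φ : ℝ | C φ^2 < 1 ∧ S φ^2 < 1} := by
      have : {φ : ℝ | C φ^2 < 1 ∧ S φ^2 < 1}
          = ((fun φ => C φ^2) ⁻¹' Iio 1) ∩ ((fun φ => S φ^2) ⁻¹' Iio 1) := rfl
      rw [this]
      exact ((contC.pow 2).isOpen_preimage _ isOpen_Iio).inter
        ((contS.pow 2).isOpen_preimage _ isOpen_Iio)
    have hBclosed : IsClosed {φ : ℝ | C φ^2 < 1 ∧ S φ^2 < 1} := by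
      rw [hBeq]
      have : {φ : ℝ | C φ^2 ≤ 1 ∧ S φ^2 ≤ 1}
          = ((fun φ => C φ^2) ⁻¹' Iic 1) ∩ ((fun φ => S φ^2) ⁻¹' Iic 1) := rfl
      rw [this]
      exact (IsClosed.preimage (contC.pow 2) isClosed_Iic).inter
        (IsClosed.preimage (contS.pow 2) isClosed_Iic)
    have hne : (0:ℝ) ∈ {φ : ℝ | C φ^2 < 1 ∧ S φ^2 < 1} := by
      simp only [mem_setOf_eq, hC0, hS0]
      constructor
      · nlinarith
      · norm_num
    have := IsClopen.eq_univ ⟨hBclosed, hBopen⟩ ⟨0, hne⟩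
    intro φ
    have : φ ∈ {φ : ℝ | C φ^2 < 1 ∧ S φ^2 < 1} := this ▸ mem_univ φ
    exact this
  -- square invariants
  have habs : ∀ φ : ℝ, C φ^2 ≤ b^2 := by
    intro φ
    obtain ⟨k1, k2⟩ := key φ
    have hEφ := hE φ
    have hs1 : (S φ^2 - 1)^2 ≤ 1 := by nlinarith [sq_nonneg (S φ)]
    by_contra h
    push_neg at h
    have h1 : 0 < C φ^2 - b^2 := by linarith
    have h2 : C φ^2 + b^2 - 2 < 0 := by linarith
    nlinarith [mul_pos h1 (show (0:ℝ) < 2 - C φ^2 - b^2 by linarith)]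
  set sm2 : ℝ := 1 - Real.sqrt ((a-1)/γ) with hsm2
  have hfrac : (a-1)/γ < 1 := by
    rw [div_lt_one hγ0]; linarith
  have hfrac0 : 0 ≤ (a-1)/γ := div_nonneg (by linarith) (le_of_lt hγ0)
  have hsm2pos : 0 < sm2 := by
    have : Real.sqrt ((a-1)/γ) < 1 := by
      calc Real.sqrt ((a-1)/γ) < Real.sqrt 1 := Real.sqrt_lt_sqrt hfrac0 hfrac
        _ = 1 := Real.sqrt_one
    simp only [hsm2]; linarith
  have hsm2le1 : sm2 ≤ 1 := by
    simp only [hsm2]; linarith [Real.sqrt_nonneg ((a-1)/γ)]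
  have hS2 : ∀ φ : ℝ, S φ^2 ≤ sm2 := by
    intro φ
    obtain ⟨k1, k2⟩ := key φ
    have hEφ := hE φ
    have hc1 : (C φ^2 - 1)^2 ≤ 1 := by nlinarith [sq_nonneg (C φ)]
    have h1 : (a-1)/γ ≤ (1 - S φ^2)^2 := by
      rw [div_le_iff₀ hγ0]; nlinarith
    have h2 : Real.sqrt ((a-1)/γ) ≤ 1 - S φ^2 := by
      calc Real.sqrt ((a-1)/γ) ≤ Real.sqrt ((1 - S φ^2)^2) := Real.sqrt_le_sqrt h1
        _ = 1 - S φ^2 := Real.sqrt_sq (by linarith)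
    simp only [hsm2]; linarith
  -- existence of a zero of C in positive time
  have hzero_ex : ∃ t : ℝ, 0 ≤ t ∧ C t = 0 := by
    by_contra hcon
    push_neg at hcon
    have hpos : ∀ t : ℝ, 0 ≤ t → 0 < C t := by
      intro t ht
      rcases lt_trichotomy (C t) 0 with h | h | h
      · exfalso
        have h0t : (0:ℝ) ≤ t := ht
        have : (0:ℝ) ∈ Icc (C t) (C 0) := by constructor <;> [linarith; (rw [hC0]; linarith)]
        obtain ⟨z, hz, hz0⟩ := intermediate_value_Icc' h0t contC.continuousOn this
        exact hcon z hz.1 hz0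
      · exact absurd h (hcon t ht)
      · exact h
    have hSmono : StrictMonoOn S (Ici 0) := by
      apply strictMonoOn_of_deriv_pos (convex_Ici 0) contS.continuousOn
      intro x hx
      rw [interior_Ici] at hx
      rw [(hS x).deriv]
      have h1 := hpos x (le_of_lt hx)
      have h2 := (key x).1
      nlinarith
    have hs1pos : 0 < S 1 := by
      have := hSmono (by exact le_refl (0:ℝ) : (0:ℝ) ∈ Ici 0) (by norm_num : (1:ℝ) ∈ Ici 0) one_pos
      rwa [hS0] at this
    set m : ℝ := γ * S 1 * (1 - sm2) with hm
    have hsq : 0 < Real.sqrt ((a-1)/γ) := Real.sqrt_pos.2 (div_pos (by linarith) hγ0)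
    have hsm2lt1 : sm2 < 1 := by simp only [hsm2]; linarith
    have hmpos : 0 < m := by
      apply mul_pos (mul_pos hγ0 hs1pos); linarith
    set M : ℝ := 1 + (b+1)/m with hM
    have hM1 : 1 < M := by
      have : 0 < (b+1)/m := div_pos (by linarith) hmpos
      simp only [hM]; linarith
    have hanti : AntitoneOn (fun t => C t + m * t) (Icc 1 M) := by
      apply antitoneOn_of_deriv_nonpos (convex_Icc 1 M)
      · exact (contC.add (continuous_const.mul continuous_id)).continuousOn
      · intro x _
        have hd : HasDerivAt (fun t : ℝ => C t + m * t) (γ * (S x ^ 3 - S x) + m) x := by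
          have := (hC x).add ((hasDerivAt_id x).const_mul m)
          exact this.congr_deriv (by ring)
        exact hd.differentiableAt.differentiableWithinAt
      · intro x hx
        rw [interior_Icc] at hx
        have hd : HasDerivAt (fun t : ℝ => C t + m * t) (γ * (S x ^ 3 - S x) + m) x := by
          have := (hC x).add ((hasDerivAt_id x).const_mul m)
          exact this.congr_deriv (by ring)
        rw [hd.deriv]
        have hx1 : S 1 ≤ S x := by
          apply hSmono.monotoneOn (by norm_num : (1:ℝ) ∈ Ici 0)
            (by exact mem_Ici.2 (by linarith [hx.1]) : x ∈ Ici 0) (le_of_lt hx.1)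
        have hx2 : S x ^2 ≤ sm2 := hS2 x
        have hx3 : 0 < S x := lt_of_lt_of_le hs1pos hx1
        -- γ(Sx³ - Sx) + m ≤ 0  ⇔  γ Sx (1-Sx²) ≥ m = γ S1 (1-sm2)
        have : γ * (S 1) * (1 - sm2) ≤ γ * S x * (1 - S x^2) := by
          apply mul_le_mul
          · exact mul_le_mul_of_nonneg_left hx1 (le_of_lt hγ0)
          · linarith
          · linarith
          · positivity
        simp only [hm] at *
        nlinarith
    have hCM : C M ≤ -1 := by
      have h1 := hanti (by constructor <;> linarith : (1:ℝ) ∈ Icc 1 M)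
        (by constructor <;> linarith : M ∈ Icc 1 M) (le_of_lt hM1)
      simp only at h1
      have hC1b : C 1 ≤ b := by
        have := habs 1
        nlinarith [hpos 1 (by norm_num)]
      have hmM : m * M = m + (b+1) := by
        rw [hM, mul_add, mul_one, mul_div_assoc', mul_comm m (b+1), mul_div_assoc,
          div_self hmpos.ne', mul_one]
      nlinarith
    have := hpos M (by linarith)
    linarith
  -- the first hitting time
  set Z : Set ℝ := {t : ℝ | 0 ≤ t ∧ C t = 0} with hZ
  have hZclosed : IsClosed Z := by
    have : Z = Ici 0 ∩ C ⁻¹' {0} := by ext t; simp [hZ, mem_setOf_eq]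
    rw [this]
    exact isClosed_Ici.inter (isClosed_singleton.preimage contC)
  have hZne : Z.Nonempty := by
    obtain ⟨t, ht1, ht2⟩ := hzero_ex; exact ⟨t, ht1, ht2⟩
  have hZbdd : BddBelow Z := ⟨0, fun t ht => ht.1⟩
  set T : ℝ := sInf Z with hT
  have hTmem : T ∈ Z := hZclosed.csInf_mem hZne hZbdd
  have hCT : C T = 0 := hTmem.2
  have hT0 : 0 < T := by
    rcases lt_or_eq_of_le hTmem.1 with h | h
    · exact h
    · exfalso; rw [← h] at hCT; rw [hC0] at hCT; linarith
  have hCposI : ∀ t : ℝ, 0 ≤ t → t < T → 0 < C t := by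
    intro t ht htT
    rcases lt_trichotomy (C t) 0 with h | h | h
    · exfalso
      have : (0:ℝ) ∈ Icc (C t) (C 0) := by constructor <;> [linarith; (rw [hC0]; linarith)]
      obtain ⟨z, hz, hz0⟩ := intermediate_value_Icc' ht contC.continuousOn this
      have : T ≤ z := csInf_le hZbdd ⟨hz.1, hz0⟩
      linarith [hz.2]
    · exfalso
      have : T ≤ t := csInf_le hZbdd ⟨ht, h⟩
      linarith
    · exact h
  have hSmonoT : StrictMonoOn S (Icc 0 T) := by
    apply strictMonoOn_of_deriv_pos (convex_Icc 0 T) contS.continuousOn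
    intro x hx
    rw [interior_Icc] at hx
    rw [(hS x).deriv]
    have h1 := hCposI x (le_of_lt hx.1) hx.2
    have h2 := (key x).1
    nlinarith
  have hSposT : ∀ t : ℝ, 0 < t → t ≤ T → 0 < S t := by
    intro t ht htT
    have := hSmonoT (by constructor <;> linarith : (0:ℝ) ∈ Icc 0 T)
      (by constructor <;> linarith : t ∈ Icc 0 T) ht
    rwa [hS0] at this
  have hCantiT : StrictAntiOn C (Icc 0 T) := by
    apply strictAntiOn_of_deriv_neg (convex_Icc 0 T) contC.continuousOn
    intro x hx
    rw [interior_Icc] at hx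
    rw [(hC x).deriv]
    have h1 := hSposT x hx.1 (le_of_lt hx.2)
    have h2 := (key x).2
    nlinarith [mul_pos (mul_pos hγ0 h1) (show (0:ℝ) < 1 - S x^2 by linarith)]
  have hST2 : S T ^2 = sm2 := by
    have hEφ := hE T
    rw [hCT] at hEφ
    have h1 : (1 - S T^2)^2 = (a-1)/γ := by
      rw [eq_div_iff (ne_of_gt hγ0)]; nlinarith
    have h2 : 1 - S T^2 = Real.sqrt ((a-1)/γ) := by
      rw [← h1, Real.sqrt_sq (by nlinarith [(key T).2])]
    simp only [hsm2]; linarith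
  -- vector field and uniqueness machinery
  set V : ℝ × ℝ → ℝ × ℝ := fun p => (γ * (p.2^3 - p.2), -(p.1^3 - p.1)) with hV
  set box : Set (ℝ × ℝ) := {p : ℝ × ℝ | |p.1| ≤ 1 ∧ |p.2| ≤ 1} with hbox
  have hlip : LipschitzOnWith 4 V box := by
    apply LipschitzOnWith.of_dist_le_mul
    intro p hp q hq
    simp only [hbox, mem_setOf_eq] at hp hq
    rw [Prod.dist_eq]
    have hd1 : dist p.1 q.1 ≤ dist p q := by rw [Prod.dist_eq]; exact le_max_left _ _
    have hd2 : dist p.2 q.2 ≤ dist p q := by rw [Prod.dist_eq]; exact le_max_right _ _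
    have hdnn : (0:ℝ) ≤ dist p q := dist_nonneg
    apply max_le
    · have h1 : |γ * (p.2^3 - p.2) - γ * (q.2^3 - q.2)| = γ * |(p.2^3 - p.2) - (q.2^3 - q.2)| := by
        rw [show γ * (p.2^3 - p.2) - γ * (q.2^3 - q.2)
            = γ * ((p.2^3 - p.2) - (q.2^3 - q.2)) by ring, abs_mul, abs_of_pos hγ0]
      have h2 := cube_lip hp.2 hq.2
      have h3 : dist p.2 q.2 = |p.2 - q.2| := Real.dist_eq _ _
      simp only [hV, Real.dist_eq]
      push_cast
      calc |γ * (p.2^3 - p.2) - γ * (q.2^3 - q.2)| = γ * |(p.2^3 - p.2) - (q.2^3 - q.2)| := h1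
        _ ≤ γ * (4 * |p.2 - q.2|) := by
            exact mul_le_mul_of_nonneg_left h2 (le_of_lt hγ0)
        _ ≤ 4 * |p.2 - q.2| := by nlinarith [abs_nonneg (p.2 - q.2)]
        _ ≤ 4 * dist p q := by rw [← h3]; linarith
    · have h2 := cube_lip hp.1 hq.1
      have h3 : dist p.1 q.1 = |p.1 - q.1| := Real.dist_eq _ _
      simp only [hV, Real.dist_eq]
      push_cast
      calc |-(p.1^3 - p.1) - -(q.1^3 - q.1)| = |(p.1^3 - p.1) - (q.1^3 - q.1)| := by
            rw [← abs_neg]; ring_nf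
        _ ≤ 4 * |p.1 - q.1| := h2
        _ ≤ 4 * dist p q := by rw [← h3]; linarith
  have huniq : ∀ (f g : ℝ → ℝ × ℝ), (∀ t, HasDerivAt f (V (f t)) t) →
      (∀ t, HasDerivAt g (V (g t)) t) → (∀ t, f t ∈ box) → (∀ t, g t ∈ box) →
      ∀ t₀ t : ℝ, f t₀ = g t₀ → t₀ ≤ t → f t = g t := by
    intro f g hf hg hfb hgb t₀ t heq htt
    have := ODE_solution_unique_of_mem_Icc_right (v := fun _ p => V p)
      (s := fun _ : ℝ => box) (K := 4) (a := t₀) (b := t) (f := f) (g := g)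
      (fun _ _ => hlip)
      (fun u _ => (hf u).continuousAt.continuousWithinAt)
      (fun u _ => (hf u).hasDerivWithinAt)
      (fun u _ => hfb u)
      (fun u _ => (hg u).continuousAt.continuousWithinAt)
      (fun u _ => (hg u).hasDerivWithinAt)
      (fun u _ => hgb u) heq
    exact this (right_mem_Icc.2 htt)
  have habs1 : ∀ t : ℝ, |C t| ≤ 1 := by
    intro t
    have := (key t).1
    rw [abs_le]; constructor <;> nlinarith
  have habs2 : ∀ t : ℝ, |S t| ≤ 1 := by
    intro t
    have := (key t).2
    rw [abs_le]; constructor <;> nlinarith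
  have hFd : ∀ t : ℝ, HasDerivAt (fun u => (C u, S u)) (V (C t, S t)) t := by
    intro t
    have := (hC t).prodMk (hS t)
    convert this using 1
  have hFb : ∀ t : ℝ, (C t, S t) ∈ box := fun t => ⟨habs1 t, habs2 t⟩
  -- symmetry about φ = 0
  have hsym1 : ∀ t : ℝ, C (-t) = C t ∧ S (-t) = -S t := by
    have hGd : ∀ t : ℝ, HasDerivAt (fun u : ℝ => (C (-u), -S (-u)))
        (V (C (-t), -S (-t))) t := by
      intro t
      have h1 : HasDerivAt (fun u : ℝ => C (-u)) (γ * (S (-t) ^3 - S (-t)) * (-1)) t :=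
        (hC (-t)).comp t (hasDerivAt_neg t)
      have h2 : HasDerivAt (fun u : ℝ => S (-u)) (-(C (-t) ^3 - C (-t)) * (-1)) t :=
        (hS (-t)).comp t (hasDerivAt_neg t)
      have h3 := h1.prodMk h2.neg
      exact h3.congr_deriv (by simp only [hV, Prod.mk.injEq]; constructor <;> ring)
    have hGb : ∀ t : ℝ, (C (-t), -S (-t)) ∈ box := by
      intro t
      refine ⟨habs1 (-t), ?_⟩
      rw [abs_neg]; exact habs2 (-t)
    have hkey : ∀ t : ℝ, 0 ≤ t → (C t, S t) = (C (-t), -S (-t)) := by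
      intro t ht
      apply huniq _ _ hFd hGd hFb hGb 0 t _ ht
      simp [hC0, hS0]
    intro t
    rcases le_total 0 t with ht | ht
    · have := hkey t ht
      rw [Prod.mk.injEq] at this
      exact ⟨this.1.symm, by rw [this.2]; ring⟩
    · have := hkey (-t) (by linarith)
      rw [Prod.mk.injEq] at this
      simp only [neg_neg] at this
      exact ⟨by rw [← this.1], by rw [this.2]⟩
  -- symmetry about φ = T
  have hsym2 : ∀ t : ℝ, C (2*T - t) = -C t ∧ S (2*T - t) = S t := by
    have hGd : ∀ t : ℝ, HasDerivAt (fun u : ℝ => (-C (2*T - u), S (2*T - u)))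
        (V (-C (2*T - t), S (2*T - t))) t := by
      intro t
      have hneg : HasDerivAt (fun u : ℝ => 2*T - u) (-1 : ℝ) t := by
        simpa using (hasDerivAt_id t).const_sub (2*T)
      have h1 : HasDerivAt (fun u : ℝ => C (2*T - u))
          (γ * (S (2*T - t) ^3 - S (2*T - t)) * (-1)) t :=
        (hC (2*T - t)).comp t hneg
      have h2 : HasDerivAt (fun u : ℝ => S (2*T - u))
          (-(C (2*T - t) ^3 - C (2*T - t)) * (-1)) t :=
        (hS (2*T - t)).comp t hneg
      have h3 := h1.neg.prodMk h2
      exact h3.congr_deriv (by simp only [hV, Prod.mk.injEq]; constructor <;> ring)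
    have hGb : ∀ t : ℝ, (-C (2*T - t), S (2*T - t)) ∈ box := by
      intro t
      refine ⟨?_, habs2 (2*T - t)⟩
      rw [abs_neg]; exact habs1 (2*T - t)
    have hkey : ∀ t : ℝ, T ≤ t → (C t, S t) = (-C (2*T - t), S (2*T - t)) := by
      intro t ht
      apply huniq _ _ hFd hGd hFb hGb T t _ ht
      rw [Prod.mk.injEq]
      constructor
      · rw [show 2*T - T = T by ring, hCT]; ring
      · rw [show 2*T - T = T by ring]
    intro t
    rcases le_total T t with ht | ht
    · have := hkey t ht
      rw [Prod.mk.injEq] at this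
      exact ⟨by rw [this.1]; ring, this.2.symm⟩
    · have := hkey (2*T - t) (by linarith)
      rw [Prod.mk.injEq] at this
      rw [show 2*T - (2*T - t) = t by ring] at this
      exact ⟨this.1, this.2⟩
  -- periodicity with period 4T
  have hper2 : ∀ t : ℝ, C (t + 2*T) = -C t ∧ S (t + 2*T) = -S t := by
    intro t
    have h1 := hsym2 (-t)
    rw [show 2*T - -t = t + 2*T by ring] at h1
    have h2 := hsym1 t
    exact ⟨by rw [h1.1, h2.1], by rw [h1.2, h2.2]⟩
  have hper : ∀ t : ℝ, C (t + 4*T) = C t ∧ S (t + 4*T) = S t := by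
    intro t
    have h1 := hper2 (t + 2*T)
    rw [show t + 2*T + 2*T = t + 4*T by ring] at h1
    have h2 := hper2 t
    exact ⟨by rw [h1.1, h2.1, neg_neg], by rw [h1.2, h2.2, neg_neg]⟩
  -- zeros of C in [0, 4T)
  have hzeros : ∀ z : ℝ, 0 ≤ z → z < 4*T → C z = 0 → z = T ∨ z = 3*T := by
    intro z h0 h4 hz
    rcases lt_trichotomy z T with h | h | h
    · exfalso; have := hCposI z h0 h; linarith [hz ▸ this]
    · exact Or.inl h
    rcases le_or_gt z (2*T) with h2 | h2
    · exfalso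
      have hs := hsym2 (2*T - z)
      rw [show 2*T - (2*T - z) = z by ring] at hs
      have hpos := hCposI (2*T - z) (by linarith) (by linarith)
      rw [hs.1] at hz
      linarith
    rcases lt_trichotomy z (3*T) with h3 | h3 | h3
    · exfalso
      have hp := hper2 (z - 2*T)
      rw [show z - 2*T + 2*T = z by ring] at hp
      have hpos := hCposI (z - 2*T) (by linarith) (by linarith)
      rw [hp.1] at hz
      linarith
    · exact Or.inr h3
    · exfalso
      have hp := hper2 (z - 2*T)
      rw [show z - 2*T + 2*T = z by ring] at hp
      have hs := hsym2 (4*T - z)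
      rw [show 2*T - (4*T - z) = z - 2*T by ring] at hs
      have hpos := hCposI (4*T - z) (by linarith) (by linarith)
      rw [hp.1, hs.1] at hz
      linarith
  -- minimality of the period 4T
  have hmin : ∀ ω' : ℝ, 0 < ω' → (∀ φ : ℝ, C (φ + ω') = C φ ∧ S (φ + ω') = S φ) →
      4*T ≤ ω' := by
    intro ω' hω' hperiod
    by_contra hlt
    push_neg at hlt
    have h1 : C (T + ω') = 0 := by rw [(hperiod T).1, hCT]
    rcases lt_or_ge (T + ω') (4*T) with h | h
    · have := hzeros (T + ω') (by linarith) h h1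
      have hω2 : ω' = 2*T := by rcases this with h' | h' <;> linarith
      have hp := (hperiod 0).1
      rw [hω2, zero_add] at hp
      have h2 := hper2 0
      rw [zero_add] at h2
      rw [h2.1, hC0] at hp
      linarith
    · have h2 := (hper (T + ω' - 4*T)).1
      rw [show T + ω' - 4*T + 4*T = T + ω' by ring] at h2
      have h3 : C (T + ω' - 4*T) = 0 := by rw [← h2, h1]
      have := hCposI (T + ω' - 4*T) (by linarith) (by linarith)
      linarith
  -- monotonicity helper
  have hCle : ∀ x y : ℝ, 0 ≤ x → x ≤ y → y ≤ T → C y ≤ C x := by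
    intro x y hx hxy hyT
    rcases eq_or_lt_of_le hxy with rfl | h
    · exact le_refl _
    · exact (hCantiT ⟨hx, by linarith⟩ ⟨by linarith, hyT⟩ h).le
  -- branch identity on [0, T]
  have hbranch : ∀ t : ℝ, 0 ≤ t → t ≤ T → SminusInner γ b (C t^2) = S t := by
    intro t h0 hT'
    have hsnn : 0 ≤ S t := by
      rcases eq_or_lt_of_le h0 with rfl | h
      · rw [hS0]
      · exact (hSposT t h hT').le
    have hs1 : S t^2 ≤ 1 := (key t).2.le
    have h1 : a - (C t^2 - 1)^2 = γ * (1 - S t^2)^2 := by linear_combination -(hE t)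
    have h2 : Real.sqrt (a - (C t^2 - 1)^2) = Real.sqrt γ * (1 - S t^2) := by
      rw [h1, show γ * (1 - S t^2)^2 = (Real.sqrt γ * (1 - S t^2))^2 by
        rw [mul_pow, Real.sq_sqrt hγ0.le]]
      exact Real.sqrt_sq (mul_nonneg (Real.sqrt_nonneg γ) (by linarith))
    have hsγ : Real.sqrt γ ≠ 0 := ne_of_gt (Real.sqrt_pos.2 hγ0)
    unfold SminusInner
    rw [← ha, h2,
      show (Real.sqrt γ)⁻¹ * (Real.sqrt γ * (1 - S t^2)) = 1 - S t^2 by field_simp,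
      show (1 : ℝ) - (1 - S t^2) = S t^2 by ring]
    exact Real.sqrt_sq hsnn
  -- range of SminusInner on (0, b)
  have hSmrange : ∀ c : ℝ, 0 < c → c < b →
      0 < SminusInner γ b (c^2) ∧ SminusInner γ b (c^2) < 1 := by
    intro c h0 hcb
    have hc2 : 0 < c^2 := by positivity
    have hcb2 : c^2 < b^2 := by nlinarith
    have hu1 : (c^2 - 1)^2 < 1 := by nlinarith
    have hub : (b^2 - 1)^2 < (c^2 - 1)^2 := by nlinarith
    have hx1 : 0 < a - (c^2-1)^2 := by linarith
    have hx2 : a - (c^2-1)^2 < γ := by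
      have : a = γ + (b^2-1)^2 := ha
      linarith
    have hs1 : Real.sqrt (a - (c^2-1)^2) < Real.sqrt γ := Real.sqrt_lt_sqrt hx1.le hx2
    have hs0 : 0 < Real.sqrt (a - (c^2-1)^2) := Real.sqrt_pos.2 hx1
    have hsγ : 0 < Real.sqrt γ := Real.sqrt_pos.2 hγ0
    have hq1 : (Real.sqrt γ)⁻¹ * Real.sqrt (a - (c^2-1)^2) < 1 := by
      have := (div_lt_one hsγ).2 hs1
      rwa [div_eq_inv_mul] at this
    have hq0 : 0 < (Real.sqrt γ)⁻¹ * Real.sqrt (a - (c^2-1)^2) := by positivity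
    constructor
    · unfold SminusInner
      rw [← ha]
      exact Real.sqrt_pos.2 (by linarith)
    · unfold SminusInner
      rw [← ha]
      calc Real.sqrt (1 - (Real.sqrt γ)⁻¹ * Real.sqrt (a - (c^2-1)^2))
          < Real.sqrt 1 := Real.sqrt_lt_sqrt (by linarith) (by linarith)
        _ = 1 := Real.sqrt_one
  have hDpos : ∀ c : ℝ, 0 < c → c < b →
      0 < γ * (SminusInner γ b (c^2) - SminusInner γ b (c^2)^3) := by
    intro c h0 hcb
    obtain ⟨h1, h2⟩ := hSmrange c h0 hcb
    set x : ℝ := SminusInner γ b (c^2) with hx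
    have h3 : 0 < 1 - x^2 := by
      have h5 : (1-x)*(1+x) = 1 - x^2 := by ring
      rw [← h5]
      exact mul_pos (by linarith) (by linarith)
    have h4 : γ * (x - x^3) = γ * (x * (1 - x^2)) := by ring
    rw [h4]
    exact mul_pos hγ0 (mul_pos h1 h3)
  set F : ℝ → ℝ :=
    fun c : ℝ => (γ * (SminusInner γ b (c ^ 2) - SminusInner γ b (c ^ 2) ^ 3))⁻¹ with hFdef
  have contSm : Continuous (fun c : ℝ => SminusInner γ b (c^2)) := by
    unfold SminusInner
    apply Real.continuous_sqrt.comp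
    apply Continuous.sub continuous_const
    apply Continuous.mul continuous_const
    apply Real.continuous_sqrt.comp
    exact continuous_const.sub (((continuous_pow 2).sub continuous_const).pow 2)
  have hFcontOn : ContinuousOn F {c : ℝ | 0 < c ∧ c < b} := by
    apply ContinuousOn.inv₀
    · exact (continuous_const.mul (contSm.sub (contSm.pow 3))).continuousOn
    · intro c hc
      exact ne_of_gt (hDpos c hc.1 hc.2)
  -- approximating sequences
  set dn : ℕ → ℝ := fun n => T / ((n : ℝ) + 3) with hdn
  have hdn0 : ∀ n, 0 < dn n := fun n => div_pos hT0 (by positivity)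
  have hdn3 : ∀ n, dn n ≤ T/3 := by
    intro n
    simp only [hdn]
    rw [div_le_div_iff₀ (by positivity) (by norm_num)]
    have h1 : 0 ≤ T * (n : ℝ) := mul_nonneg hT0.le (Nat.cast_nonneg n)
    linarith
  have hdnT : ∀ n, dn n < T - dn n := by intro n; have := hdn3 n; have := hdn0 n; linarith
  have hdnanti : ∀ n m : ℕ, n ≤ m → dn m ≤ dn n := by
    intro n m h
    have hcast : (n : ℝ) ≤ (m : ℝ) := Nat.cast_le.2 h
    simp only [hdn]
    rw [div_le_div_iff₀ (by positivity) (by positivity)]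
    have h1 : 0 ≤ T * ((m : ℝ) - n) := mul_nonneg hT0.le (by linarith)
    nlinarith
  have hdlim : Filter.Tendsto dn Filter.atTop (nhds 0) := by
    apply Filter.Tendsto.div_atTop tendsto_const_nhds
    exact Filter.tendsto_atTop_add_const_right Filter.atTop 3 tendsto_natCast_atTop_atTop
  set an : ℕ → ℝ := fun n => C (T - dn n) with han
  set bn : ℕ → ℝ := fun n => C (dn n) with hbn
  have hanpos : ∀ n, 0 < an n := by
    intro n
    exact hCposI _ (by linarith [hdnT n, hdn0 n]) (by linarith [hdn0 n])
  have hbnb : ∀ n, bn n < b := by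
    intro n
    have := hCantiT (⟨le_refl 0, hT0.le⟩ : (0:ℝ) ∈ Icc 0 T)
      (⟨(hdn0 n).le, by linarith [hdnT n, hdn0 n]⟩ : dn n ∈ Icc 0 T) (hdn0 n)
    rwa [hC0] at this
  have hanbn : ∀ n, an n < bn n := by
    intro n
    exact hCantiT (⟨(hdn0 n).le, by linarith [hdnT n, hdn0 n]⟩ : dn n ∈ Icc 0 T)
      (⟨by linarith [hdn0 n, hdnT n], by linarith [hdn0 n]⟩ : T - dn n ∈ Icc 0 T) (hdnT n)
  have hanmono : ∀ n m : ℕ, n ≤ m → an m ≤ an n := by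
    intro n m h
    exact hCle (T - dn n) (T - dn m) (by linarith [hdnT n, hdn0 n])
      (by linarith [hdnanti n m h]) (by linarith [hdn0 m])
  have hbnmono : ∀ n m : ℕ, n ≤ m → bn n ≤ bn m := by
    intro n m h
    exact hCle (dn m) (dn n) (hdn0 m).le (hdnanti n m h) (by linarith [hdnT n, hdn0 n])
  have hanlim : Filter.Tendsto an Filter.atTop (nhds 0) := by
    have h1 : Filter.Tendsto (fun n => T - dn n) Filter.atTop (nhds (T - 0)) :=
      tendsto_const_nhds.sub hdlim
    rw [sub_zero] at h1
    have h2 := (contC.tendsto T).comp h1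
    rw [hCT] at h2
    exact h2
  have hbnlim : Filter.Tendsto bn Filter.atTop (nhds b) := by
    have h2 := (contC.tendsto 0).comp hdlim
    rw [hC0] at h2
    exact h2
  have himg : ∀ n, ∀ x ∈ Icc (dn n) (T - dn n), C x ∈ {c : ℝ | 0 < c ∧ c < b} := by
    intro n x hx
    constructor
    · exact hCposI x (by linarith [hx.1, hdn0 n]) (by linarith [hx.2, hdn0 n])
    · have := hCantiT (⟨le_refl 0, hT0.le⟩ : (0:ℝ) ∈ Icc 0 T)
        (⟨by linarith [hx.1, hdn0 n], by linarith [hx.2, hdn0 n]⟩ : x ∈ Icc 0 T)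
        (by linarith [hx.1, hdn0 n])
      rwa [hC0] at this
  -- key substitution computation
  have hIoc : ∀ n, ∫ c in Ioc (an n) (bn n), F c = T - 2 * dn n := by
    intro n
    have hδ0 := hdn0 n
    have hle : dn n ≤ T - dn n := (hdnT n).le
    have huIcc : uIcc (dn n) (T - dn n) = Icc (dn n) (T - dn n) := uIcc_of_le hle
    have hsub : (∫ x in (dn n)..(T - dn n), (γ * (S x^3 - S x)) • (F ∘ C) x)
        = ∫ u in (C (dn n))..(C (T - dn n)), F u := by
      apply intervalIntegral.integral_comp_smul_deriv'
      · exact fun x _ => hC x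
      · exact (continuous_const.mul ((contS.pow 3).sub contS)).continuousOn
      · apply hFcontOn.mono
        rintro y ⟨x, hx, rfl⟩
        rw [huIcc] at hx
        exact himg n x hx
    have heq : EqOn (fun x => (γ * (S x^3 - S x)) • (F ∘ C) x) (fun _ => (-1 : ℝ))
        (uIcc (dn n) (T - dn n)) := by
      intro x hx
      rw [huIcc] at hx
      have hx0 : 0 < x := lt_of_lt_of_le hδ0 hx.1
      have hxT : x ≤ T := by linarith [hx.2]
      have hsx := hSposT x hx0 hxT
      have hsx2 := (key x).2
      have hA : 0 < γ * (S x - S x^3) := by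
        have h3 : 0 < 1 - S x^2 := by linarith
        have h4 : γ * (S x - S x^3) = γ * (S x * (1 - S x^2)) := by ring
        rw [h4]
        exact mul_pos hγ0 (mul_pos hsx h3)
      simp only [Function.comp, hFdef]
      rw [hbranch x hx0.le hxT, smul_eq_mul,
        show γ * (S x^3 - S x) = -(γ * (S x - S x^3)) by ring,
        neg_mul, mul_inv_cancel₀ (ne_of_gt hA)]
    have hLHS : (∫ x in (dn n)..(T - dn n), (γ * (S x^3 - S x)) • (F ∘ C) x)
        = -(T - 2 * dn n) := by
      rw [intervalIntegral.integral_congr heq, intervalIntegral.integral_const,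
        smul_eq_mul]
      ring
    have hRHS : (∫ u in (C (dn n))..(C (T - dn n)), F u)
        = -(∫ u in (an n)..(bn n), F u) := by
      rw [intervalIntegral.integral_symm]
    have hIcc : (∫ u in (an n)..(bn n), F u) = T - 2 * dn n := by
      rw [hLHS, hRHS] at hsub
      linarith
    rw [← intervalIntegral.integral_of_le (hanbn n).le]
    exact hIcc
  -- integrability
  have hIocInt : ∀ n, MeasureTheory.IntegrableOn F (Ioc (an n) (bn n)) := by
    intro n
    apply MeasureTheory.IntegrableOn.mono_set _ Ioc_subset_Icc_self
    apply ContinuousOn.integrableOn_Icc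
    apply hFcontOn.mono
    intro x hx
    exact ⟨lt_of_lt_of_le (hanpos n) hx.1, lt_of_le_of_lt hx.2 (hbnb n)⟩
  have hnorm : ∀ n, ∫ x in Ioc (an n) (bn n), ‖F x‖ = T - 2 * dn n := by
    intro n
    have hcongr : ∫ x in Ioc (an n) (bn n), ‖F x‖ = ∫ x in Ioc (an n) (bn n), F x := by
      apply MeasureTheory.setIntegral_congr_fun measurableSet_Ioc
      intro x hx
      have h0x : 0 < x := lt_trans (hanpos n) hx.1
      have hxb : x < b := lt_of_le_of_lt hx.2 (hbnb n)
      exact Real.norm_of_nonneg (inv_pos.2 (hDpos x h0x hxb)).le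
    rw [hcongr]
    exact hIoc n
  have hFint : MeasureTheory.IntegrableOn F (Ioo 0 b) := by
    have hmain := MeasureTheory.integrableOn_Ioc_of_intervalIntegral_norm_bounded
      (l := Filter.atTop) (I := T) (a := an) (b := bn) (f := F)
      hIocInt hanlim hbnlim ?_
    · exact hmain.mono_set Ioo_subset_Ioc_self
    · apply Filter.Eventually.of_forall
      intro n
      rw [hnorm n]
      linarith [hdn0 n]
  -- value of the improper integral
  have hunion : (⋃ n, Ioc (an n) (bn n)) = Ioo 0 b := by
    apply Subset.antisymm
    · apply iUnion_subset
      intro n x hx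
      exact ⟨lt_trans (hanpos n) hx.1, lt_of_le_of_lt hx.2 (hbnb n)⟩
    · intro x hx
      have h1 : ∀ᶠ n in Filter.atTop, an n < x := hanlim.eventually_lt_const hx.1
      have h2 : ∀ᶠ n in Filter.atTop, x < bn n := hbnlim.eventually_const_lt hx.2
      obtain ⟨n, hn1, hn2⟩ := (h1.and h2).exists
      exact mem_iUnion.2 ⟨n, hn1, hn2.le⟩
  have hmonoset : Monotone (fun n => Ioc (an n) (bn n)) := by
    intro n m hnm
    exact Ioc_subset_Ioc (hanmono n m hnm) (hbnmono n m hnm)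
  have hval : ∫ c in Ioo 0 b, F c = T := by
    have ht1 := MeasureTheory.tendsto_setIntegral_of_monotone
      (fun n => measurableSet_Ioc) hmonoset (by rw [hunion]; exact hFint)
    rw [hunion] at ht1
    have ht2 : Filter.Tendsto (fun n => ∫ c in Ioc (an n) (bn n), F c)
        Filter.atTop (nhds T) := by
      have heq2 : (fun n => ∫ c in Ioc (an n) (bn n), F c) = fun n => T - 2 * dn n :=
        funext hIoc
      rw [heq2]
      have h3 : Filter.Tendsto (fun n => T - 2 * dn n) Filter.atTop (nhds (T - 2 * 0)) :=
        tendsto_const_nhds.sub (hdlim.const_mul 2)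
      simpa using h3
    exact tendsto_nhds_unique ht1 ht2
  -- conclusion
  refine ⟨4*T, by linarith, hper, hmin, hFint, ?_⟩
  rw [hval]
end

section
/- Let γ ∈ (0,1], σ > √(1 + γ^{−1/2}), and set r^σ = (1 + (γσ²(σ² − 2))^{1/2})^{1/2}. Let (b,l) be initial data satisfying one of: l = 0 and b ∈ (0, r^i) ∪ (r^e, r^σ); l = 0 and |b| ∈ (1, r^e); l ∈ {−1,1} and |b| ∈ (1, r^s). Let (C,S) be the periodic solution of the unperturbed system with C(0) = b, S(0) = l. Then there exist ϱ > 0 and continuous functions Ĉ, Ŝ : {φ ∈ ℂ : |Im φ| ≤ ϱ} → ℂ, holomorphic on the open strip |Im φ| < ϱ, periodic with the same period as (C,S), coinciding with C and S respectively on ℝ, and such that the supremum over the closed strip of max(|Ĉ(φ)|, |Ŝ(φ)|) is strictly less than σ. -/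
set_option maxHeartbeats 1000000
open Set Metric intervalIntegral Filter Topology
open scoped Interval

noncomputable section AnalyticStripExtensionAux

/-- complex vector field -/
def FF (γ : ℝ) (p : ℂ × ℂ) : ℂ × ℂ := ((γ:ℂ) * (p.2^3 - p.2), -(p.1^3 - p.1))

lemma FF_diff (γ : ℝ) : Differentiable ℂ (FF γ) := by
  unfold FF; fun_prop

lemma cube_diff_bound {R : ℝ} {u v : ℂ} (hu : ‖u‖ ≤ R) (hv : ‖v‖ ≤ R) :
    ‖(u^3 - u) - (v^3 - v)‖ ≤ (3*R^2+1) * ‖u - v‖ := by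
  have h : (u^3 - u) - (v^3 - v) = (u - v) * (u^2 + u*v + v^2 - 1) := by ring
  have hR : 0 ≤ R := le_trans (norm_nonneg u) hu
  rw [h, norm_mul, mul_comm]
  gcongr
  calc ‖u^2 + u*v + v^2 - 1‖ ≤ ‖u‖^2 + ‖u‖*‖v‖ + ‖v‖^2 + 1 := by
        refine le_trans (norm_sub_le _ _) ?_
        have := norm_add₃_le (a := u^2) (b := u*v) (c := v^2)
        simp only [norm_mul, norm_pow, norm_one] at *
        linarith
    _ ≤ 3*R^2+1 := by nlinarith [norm_nonneg u, norm_nonneg v]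

lemma FF_lip {γ R : ℝ} (hγ0 : 0 ≤ γ) (hγ1 : γ ≤ 1) {p q : ℂ × ℂ}
    (hp : ‖p‖ ≤ R) (hq : ‖q‖ ≤ R) :
    ‖FF γ p - FF γ q‖ ≤ (3*R^2+1) * ‖p - q‖ := by
  have hR : 0 ≤ R := le_trans (norm_nonneg p) hp
  have hp1 : ‖p.1‖ ≤ R := le_trans (norm_fst_le p) hp
  have hp2 : ‖p.2‖ ≤ R := le_trans (norm_snd_le p) hp
  have hq1 : ‖q.1‖ ≤ R := le_trans (norm_fst_le q) hq
  have hq2 : ‖q.2‖ ≤ R := le_trans (norm_snd_le q) hq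
  have h1 : ‖p.1 - q.1‖ ≤ ‖p - q‖ := norm_fst_le (p - q)
  have h2 : ‖p.2 - q.2‖ ≤ ‖p - q‖ := norm_snd_le (p - q)
  have key2 := cube_diff_bound hp2 hq2
  have key1 := cube_diff_bound hp1 hq1
  have hL : (0:ℝ) ≤ 3*R^2+1 := by positivity
  rw [Prod.norm_def]
  apply max_le
  · simp only [FF, Prod.fst_sub]
    rw [show (γ:ℂ) * (p.2^3 - p.2) - (γ:ℂ) * (q.2^3 - q.2)
        = (γ:ℂ) * ((p.2^3 - p.2) - (q.2^3 - q.2)) by ring, norm_mul]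
    have : ‖(γ:ℂ)‖ ≤ 1 := by
      rw [Complex.norm_real, Real.norm_eq_abs, abs_of_nonneg hγ0]; exact hγ1
    calc ‖(γ:ℂ)‖ * ‖(p.2^3 - p.2) - (q.2^3 - q.2)‖
        ≤ 1 * ((3*R^2+1) * ‖p.2 - q.2‖) := by
          apply mul_le_mul this key2 (norm_nonneg _) zero_le_one
      _ ≤ (3*R^2+1) * ‖p - q‖ := by rw [one_mul]; gcongr
  · simp only [FF, Prod.snd_sub]
    rw [show -(p.1^3 - p.1) - -(q.1^3 - q.1) = -((p.1^3-p.1) - (q.1^3-q.1)) by ring, norm_neg]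
    calc ‖(p.1^3 - p.1) - (q.1^3 - q.1)‖ ≤ (3*R^2+1) * ‖p.1 - q.1‖ := key1
      _ ≤ (3*R^2+1) * ‖p - q‖ := by gcongr

lemma FF_bound {γ R : ℝ} (hγ0 : 0 ≤ γ) (hγ1 : γ ≤ 1) {p : ℂ × ℂ} (hp : ‖p‖ ≤ R) :
    ‖FF γ p‖ ≤ R^3 + R := by
  have hR : 0 ≤ R := le_trans (norm_nonneg p) hp
  have hp1 : ‖p.1‖ ≤ R := le_trans (norm_fst_le p) hp
  have hp2 : ‖p.2‖ ≤ R := le_trans (norm_snd_le p) hp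
  have hγc : ‖(γ:ℂ)‖ ≤ 1 := by
    rw [Complex.norm_real, Real.norm_eq_abs, abs_of_nonneg hγ0]; exact hγ1
  have haux : ∀ u : ℂ, ‖u‖ ≤ R → ‖u^3 - u‖ ≤ R^3 + R := by
    intro u hu
    calc ‖u^3 - u‖ ≤ ‖u^3‖ + ‖u‖ := norm_sub_le _ _
      _ = ‖u‖^3 + ‖u‖ := by rw [norm_pow]
      _ ≤ R^3 + R := by gcongr
  rw [Prod.norm_def]
  apply max_le
  · calc ‖(FF γ p).1‖ = ‖(γ:ℂ)‖ * ‖p.2^3 - p.2‖ := by simp [FF, norm_mul]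
      _ ≤ 1 * (R^3 + R) := by
          apply mul_le_mul hγc (haux _ hp2) (norm_nonneg _) zero_le_one
      _ = R^3 + R := one_mul _
  · calc ‖(FF γ p).2‖ = ‖p.1^3 - p.1‖ := by rw [show (FF γ p).2 = -(p.1^3 - p.1) from rfl, norm_neg]
      _ ≤ R^3 + R := haux _ hp1

/-- key: derivative of the Picard integral operator -/
lemma hasDerivAt_T {g : ℂ → ℂ × ℂ} {c : ℂ} {r : ℝ}
    (hg : DifferentiableOn ℂ g (ball c r)) {z₀ : ℂ} (hz₀ : z₀ ∈ ball c r) :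
    HasDerivAt (fun z => ∫ t in (0:ℝ)..1, (z - c) • g (c + t • (z - c))) (g z₀) z₀ := by
  have hd : ‖z₀ - c‖ < r := by rwa [mem_ball, dist_eq_norm] at hz₀
  set d := ‖z₀ - c‖ with hd_def
  have hd0 : 0 ≤ d := norm_nonneg _
  set r' := (d + r)/2 with hr'_def
  have hdr' : d < r' := by simp only [hr'_def]; linarith
  have hr'r : r' < r := by simp only [hr'_def]; linarith
  have hr'0 : 0 ≤ r' := le_trans hd0 hdr'.le
  set εp := r' - d with hεp_def
  have hεp : 0 < εp := by simp only [hεp_def]; linarith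
  have hsub : closedBall c r' ⊆ ball c r := closedBall_subset_ball hr'r
  -- points stay in the closed ball
  have hmaps : ∀ x ∈ ball z₀ εp, ∀ t ∈ Icc (0:ℝ) 1, c + t • (x - c) ∈ closedBall c r' := by
    intro x hx t ht
    rw [mem_closedBall, dist_eq_norm]
    have hxc : ‖x - c‖ ≤ r' := by
      have h1 : ‖x - z₀‖ < εp := by rwa [mem_ball, dist_eq_norm] at hx
      calc ‖x - c‖ ≤ ‖x - z₀‖ + ‖z₀ - c‖ := by
            simpa using norm_add_le (x - z₀) (z₀ - c)
        _ ≤ εp + d := by linarith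
        _ = r' := by simp [hεp_def]
    calc ‖c + t • (x - c) - c‖ = ‖t • (x - c)‖ := by ring_nf
      _ = |t| * ‖x - c‖ := by rw [norm_smul, Real.norm_eq_abs]
      _ ≤ 1 * r' := by
          apply mul_le_mul _ hxc (norm_nonneg _) zero_le_one
          rw [abs_of_nonneg ht.1]; exact ht.2
      _ = r' := one_mul _
  have hgc : ContinuousOn g (closedBall c r') := (hg.continuousOn).mono hsub
  have han : AnalyticOnNhd ℂ g (ball c r) := hg.analyticOnNhd isOpen_ball
  have hg'c : ContinuousOn (deriv g) (closedBall c r') := (han.deriv.continuousOn).mono hsub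
  obtain ⟨Mg, hMg⟩ := (isCompact_closedBall c r').exists_bound_of_continuousOn hgc
  obtain ⟨Mg', hMg'⟩ := (isCompact_closedBall c r').exists_bound_of_continuousOn hg'c
  have hMg0 : 0 ≤ Mg := le_trans (norm_nonneg _) (hMg c (mem_closedBall_self hr'0))
  have hMg'0 : 0 ≤ Mg' := le_trans (norm_nonneg _) (hMg' c (mem_closedBall_self hr'0))
  set F : ℂ → ℝ → ℂ × ℂ := fun x t => (x - c) • g (c + t • (x - c)) with hF_def
  set F' : ℂ → ℝ → ℂ × ℂ := fun x t =>
    g (c + t • (x - c)) + (x - c) • ((t • (1:ℂ)) • deriv g (c + t • (x - c))) with hF'_def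
  have hIsub : Ι (0:ℝ) 1 ⊆ Icc 0 1 := by
    rw [uIoc_of_le zero_le_one]; exact Ioc_subset_Icc_self
  -- continuity in t
  have hinnercont : ∀ x : ℂ, Continuous (fun t : ℝ => c + t • (x - c)) := by
    intro x; fun_prop
  have hcont : ∀ x ∈ ball z₀ εp, ContinuousOn (fun t : ℝ => F x t) (Icc 0 1) := by
    intro x hx
    exact (hgc.comp (hinnercont x).continuousOn (fun t ht => hmaps x hx t ht)).const_smul (x - c)
  have hz₀εp : z₀ ∈ ball z₀ εp := mem_ball_self hεp
  -- the differentiation under the integral sign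
  have main := intervalIntegral.hasDerivAt_integral_of_dominated_loc_of_deriv_le
    (𝕜 := ℂ) (μ := MeasureTheory.volume) (F := F) (F' := F') (x₀ := z₀)
    (bound := fun _ => Mg + r' * Mg') (a := 0) (b := 1) (ball_mem_nhds z₀ hεp)
    (by
      filter_upwards [isOpen_ball.mem_nhds hz₀εp] with x hx
      exact ((hcont x hx).mono hIsub).aestronglyMeasurable measurableSet_uIoc)
    (((hcont z₀ hz₀εp).mono (by rw [uIcc_of_le zero_le_one])).intervalIntegrable)
    (by
      have : ContinuousOn (fun t : ℝ => F' z₀ t) (Icc 0 1) := by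
        have c1 : ContinuousOn (fun t : ℝ => g (c + t • (z₀ - c))) (Icc 0 1) :=
          hgc.comp (hinnercont z₀).continuousOn (fun t ht => hmaps z₀ hz₀εp t ht)
        have c2 : ContinuousOn (fun t : ℝ => deriv g (c + t • (z₀ - c))) (Icc 0 1) :=
          hg'c.comp (hinnercont z₀).continuousOn (fun t ht => hmaps z₀ hz₀εp t ht)
        have c3 : ContinuousOn (fun t : ℝ => t • (1:ℂ)) (Icc 0 1) := by fun_prop
        exact c1.add ((c3.smul c2).const_smul (z₀ - c))
      exact (this.mono hIsub).aestronglyMeasurable measurableSet_uIoc)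
    (by
      apply MeasureTheory.ae_of_all
      intro t ht x hx
      have htI : t ∈ Icc (0:ℝ) 1 := hIsub ht
      have hw : c + t • (x - c) ∈ closedBall c r' := hmaps x hx t htI
      have hxc : ‖x - c‖ ≤ r' := by
        have := mem_closedBall.mp (hmaps x hx 1 (by norm_num))
        rw [dist_eq_norm] at this
        simpa using this
      calc ‖F' x t‖ ≤ ‖g (c + t • (x - c))‖ + ‖(x - c) • ((t • (1:ℂ)) • deriv g (c + t • (x - c)))‖ :=
            norm_add_le _ _
        _ ≤ Mg + r' * Mg' := by
            apply add_le_add (hMg _ hw)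
            rw [norm_smul, norm_smul, norm_smul]
            have ht1 : ‖t‖ ≤ 1 := by
              rw [Real.norm_eq_abs, abs_of_nonneg htI.1]; exact htI.2
            calc ‖x - c‖ * (‖t‖ * ‖(1:ℂ)‖ * ‖deriv g (c + t • (x - c))‖)
                ≤ r' * (1 * 1 * Mg') := by
                  apply mul_le_mul hxc _ (by positivity) hr'0
                  apply mul_le_mul _ (hMg' _ hw) (norm_nonneg _) (by norm_num)
                  simp only [norm_one, mul_one]; exact ht1
              _ = r' * Mg' := by ring)
    intervalIntegrable_const
    (by
      apply MeasureTheory.ae_of_all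
      intro t ht x hx
      have htI : t ∈ Icc (0:ℝ) 1 := hIsub ht
      have hw := hmaps x hx t htI
      have hgd : HasDerivAt g (deriv g (c + t • (x - c))) (c + t • (x - c)) :=
        (hg.differentiableAt (isOpen_ball.mem_nhds (hsub hw))).hasDerivAt
      have hinner : HasDerivAt (fun y : ℂ => c + t • (y - c)) (t • (1:ℂ)) x :=
        (((hasDerivAt_id x).sub_const c).const_smul t).const_add c
      have hcomp := HasDerivAt.scomp (𝕜 := ℂ) (𝕜' := ℂ) x hgd hinner
      have h2 := ((hasDerivAt_id x).sub_const c).smul hcomp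
      simp only [id_eq] at h2
      have heq : (fun y : ℂ => (y - c) • (g ∘ fun y : ℂ => c + t • (y - c)) y) = fun y => F y t := rfl
      replace h2 : HasDerivAt (fun y => F y t) _ x := h2
      refine h2.congr_deriv ?_
      simp only [hF'_def, Function.comp_apply, one_smul]
      abel)
  obtain ⟨hint, hderiv⟩ := main
  -- compute the integral of F' z₀ via FTC
  have hFTC : ∫ t in (0:ℝ)..1, F' z₀ t = g z₀ := by
    have hψ : ∀ t ∈ uIcc (0:ℝ) 1,
        HasDerivAt (fun s : ℝ => s • g (c + s • (z₀ - c))) (F' z₀ t) t := by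
      intro t ht
      rw [uIcc_of_le zero_le_one] at ht
      have hw := hmaps z₀ hz₀εp t ht
      have hgd : HasDerivAt g (deriv g (c + t • (z₀ - c))) (c + t • (z₀ - c)) :=
        (hg.differentiableAt (isOpen_ball.mem_nhds (hsub hw))).hasDerivAt
      have hinner : HasDerivAt (fun s : ℝ => c + s • (z₀ - c)) ((1:ℝ) • (z₀ - c)) t :=
        ((hasDerivAt_id t).smul_const (z₀ - c)).const_add c
      have hcomp : HasDerivAt (fun s : ℝ => g (c + s • (z₀ - c)))
          ((z₀ - c) • deriv g (c + t • (z₀ - c))) t := by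
        have := (hgd.hasFDerivAt.restrictScalars ℝ).comp_hasDerivAt t hinner
        simp only [one_smul] at this
        exact this
      have := (hasDerivAt_id t).smul hcomp
      simp only [one_smul, id_eq] at this
      refine this.congr_deriv ?_
      simp only [hF'_def]
      rw [smul_assoc, one_smul, smul_comm t (z₀ - c) (deriv g (c + t • (z₀ - c)))]
      abel
    rw [intervalIntegral.integral_eq_sub_of_hasDerivAt hψ hint]
    simp
  rw [hFTC] at hderiv
  exact hderiv

lemma seg_mem_closedBall {x z : ℂ} {δ : ℝ} (hz : z ∈ closedBall x δ) {t : ℝ}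
    (ht : t ∈ Icc (0:ℝ) 1) : x + t • (z - x) ∈ closedBall x δ := by
  rw [mem_closedBall, dist_eq_norm] at hz ⊢
  calc ‖x + t • (z - x) - x‖ = ‖t • (z - x)‖ := by ring_nf
    _ = |t| * ‖z - x‖ := by rw [norm_smul, Real.norm_eq_abs]
    _ ≤ 1 * δ := by
        apply mul_le_mul _ hz (norm_nonneg _) zero_le_one
        rw [abs_of_nonneg ht.1]; exact ht.2
    _ = δ := one_mul _

def pic (γ : ℝ) (x : ℂ) (v : ℂ × ℂ) : ℕ → ℂ → ℂ × ℂ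
  | 0 => fun _ => v
  | n+1 => fun z => v + ∫ t in (0:ℝ)..1, (z - x) • FF γ (pic γ x v n (x + t • (z - x)))

lemma pic_differentiable (γ : ℝ) (x : ℂ) (v : ℂ × ℂ) :
    ∀ n, Differentiable ℂ (pic γ x v n) := by
  intro n
  induction n with
  | zero => exact differentiable_const v
  | succ n ih =>
    intro z₀
    have hg : DifferentiableOn ℂ (fun w => FF γ (pic γ x v n w)) (ball x (‖z₀ - x‖ + 1)) :=
      ((FF_diff γ).comp ih).differentiableOn
    have hz₀ : z₀ ∈ ball x (‖z₀ - x‖ + 1) := by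
      rw [mem_ball, dist_eq_norm]; linarith
    exact ((hasDerivAt_T hg hz₀).const_add v).differentiableAt

lemma pic_zero_at (γ : ℝ) (x : ℂ) (v : ℂ × ℂ) : ∀ n, pic γ x v n x = v := by
  intro n
  cases n with
  | zero => rfl
  | succ n => simp [pic]

lemma pic_hasDerivAt (γ : ℝ) (x : ℂ) (v : ℂ × ℂ) (n : ℕ) (z₀ : ℂ) :
    HasDerivAt (pic γ x v (n+1)) (FF γ (pic γ x v n z₀)) z₀ := by
  have hg : DifferentiableOn ℂ (fun w => FF γ (pic γ x v n w)) (ball x (‖z₀ - x‖ + 1)) :=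
    ((FF_diff γ).comp (pic_differentiable γ x v n)).differentiableOn
  have hz₀ : z₀ ∈ ball x (‖z₀ - x‖ + 1) := by
    rw [mem_ball, dist_eq_norm]; linarith
  exact ((hasDerivAt_T hg hz₀).const_add v)

lemma exists_local_sol {γ M ε δ : ℝ} (hγ0 : 0 ≤ γ) (hγ1 : γ ≤ 1) (hM : 0 ≤ M)
    (hε : 0 < ε) (hδ : 0 < δ)
    (hδK : δ * ((M+ε)^3 + (M+ε)) ≤ ε) (hδL : δ * (3*(M+ε)^2+1) < 1)
    (x : ℂ) (v : ℂ × ℂ) (hv : ‖v‖ ≤ M) :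
    ∃ f : ℂ → ℂ × ℂ, ContinuousOn f (closedBall x δ) ∧
      (∀ z ∈ ball x δ, HasDerivAt f (FF γ (f z)) z) ∧
      (∀ z ∈ closedBall x δ, ‖f z - v‖ ≤ ε) ∧ f x = v := by
  set R := M + ε with hR_def
  have hR0 : 0 < R := by positivity
  set K := R^3 + R with hK_def
  have hK0 : 0 < K := by positivity
  set L : ℝ := 3*R^2+1 with hL_def
  have hL0 : 0 < L := by positivity
  set q := δ * L with hq_def
  have hq0 : 0 ≤ q := by positivity
  have hq1 : q < 1 := hδL
  set P := pic γ x v with hP_def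
  have hPd := pic_differentiable γ x v
  have hPc : ∀ n, Continuous (P n) := fun n => (hPd n).continuous
  -- boundedness of iterates
  have hbound : ∀ n, ∀ z ∈ closedBall x δ, ‖P n z - v‖ ≤ ε := by
    intro n
    induction n with
    | zero => intro z _; simp only [hP_def, pic, sub_self, norm_zero]; exact hε.le
    | succ n ih =>
      intro z hz
      have hzx : ‖z - x‖ ≤ δ := by rwa [mem_closedBall, dist_eq_norm] at hz
      have key : ∀ t ∈ Ι (0:ℝ) 1, ‖(z - x) • FF γ (P n (x + t • (z - x)))‖ ≤ δ * K := by
        intro t ht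
        have htI : t ∈ Icc (0:ℝ) 1 := by
          rw [uIoc_of_le zero_le_one] at ht; exact Ioc_subset_Icc_self ht
        have hw := seg_mem_closedBall hz htI
        have h1 : ‖P n (x + t • (z - x))‖ ≤ R := by
          calc ‖P n (x + t • (z - x))‖ ≤ ‖P n (x + t • (z - x)) - v‖ + ‖v‖ := by
                simpa using norm_add_le (P n (x + t • (z - x)) - v) v
            _ ≤ ε + M := add_le_add (ih _ hw) hv
            _ = R := by rw [hR_def]; ring
        rw [norm_smul]
        exact mul_le_mul hzx (FF_bound hγ0 hγ1 h1) (norm_nonneg _) hδ.le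
      have : ‖P (n+1) z - v‖ = ‖∫ t in (0:ℝ)..1, (z - x) • FF γ (P n (x + t • (z - x)))‖ := by
        simp [hP_def, pic]
      rw [this]
      calc ‖∫ t in (0:ℝ)..1, (z - x) • FF γ (P n (x + t • (z - x)))‖ ≤ δ * K * |1 - 0| :=
            intervalIntegral.norm_integral_le_of_norm_le_const key
        _ = δ * K := by norm_num
        _ ≤ ε := hδK
  -- integrability helper
  have hint : ∀ n (z : ℂ), IntervalIntegrable
      (fun t : ℝ => (z - x) • FF γ (P n (x + t • (z - x)))) MeasureTheory.volume 0 1 := by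
    intro n z
    apply Continuous.intervalIntegrable
    have : Continuous (fun t : ℝ => x + t • (z - x)) := by fun_prop
    exact (((FF_diff γ).continuous.comp (hPc n)).comp this).const_smul (z - x)
  -- contraction
  have hcontr : ∀ n, ∀ z ∈ closedBall x δ, ‖P (n+1) z - P n z‖ ≤ ε * q^n := by
    intro n
    induction n with
    | zero =>
      intro z hz
      have h1 : P 1 z - P 0 z = ∫ t in (0:ℝ)..1, (z - x) • FF γ (P 0 (x + t • (z - x))) := by
        simp [hP_def, pic]
      rw [h1]
      have hzx : ‖z - x‖ ≤ δ := by rwa [mem_closedBall, dist_eq_norm] at hz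
      have key : ∀ t ∈ Ι (0:ℝ) 1, ‖(z - x) • FF γ (P 0 (x + t • (z - x)))‖ ≤ δ * K := by
        intro t ht
        have h1 : ‖P 0 (x + t • (z - x))‖ ≤ R := by
          simp only [hP_def, pic]
          calc ‖v‖ ≤ M := hv
            _ ≤ R := by rw [hR_def]; linarith
        rw [norm_smul]
        exact mul_le_mul hzx (FF_bound hγ0 hγ1 h1) (norm_nonneg _) hδ.le
      calc ‖∫ t in (0:ℝ)..1, (z - x) • FF γ (P 0 (x + t • (z - x)))‖ ≤ δ * K * |1 - 0| :=
            intervalIntegral.norm_integral_le_of_norm_le_const key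
        _ = δ * K := by norm_num
        _ ≤ ε := hδK
        _ = ε * q^0 := by norm_num
    | succ n ih =>
      intro z hz
      have hzx : ‖z - x‖ ≤ δ := by rwa [mem_closedBall, dist_eq_norm] at hz
      have h1 : P (n+2) z - P (n+1) z = ∫ t in (0:ℝ)..1,
          ((z - x) • FF γ (P (n+1) (x + t • (z - x))) - (z - x) • FF γ (P n (x + t • (z - x)))) := by
        rw [intervalIntegral.integral_sub (hint (n+1) z) (hint n z)]
        simp [hP_def, pic]
      rw [h1]
      have key : ∀ t ∈ Ι (0:ℝ) 1, ‖(z - x) • FF γ (P (n+1) (x + t • (z - x)))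
          - (z - x) • FF γ (P n (x + t • (z - x)))‖ ≤ δ * (L * (ε * q^n)) := by
        intro t ht
        have htI : t ∈ Icc (0:ℝ) 1 := by
          rw [uIoc_of_le zero_le_one] at ht; exact Ioc_subset_Icc_self ht
        have hw := seg_mem_closedBall hz htI
        have hb1 : ‖P (n+1) (x + t • (z - x))‖ ≤ R := by
          calc ‖P (n+1) (x + t • (z - x))‖ ≤ ‖P (n+1) (x + t • (z - x)) - v‖ + ‖v‖ := by
                simpa using norm_add_le (P (n+1) (x + t • (z - x)) - v) v
            _ ≤ ε + M := add_le_add (hbound (n+1) _ hw) hv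
            _ = R := by rw [hR_def]; ring
        have hb2 : ‖P n (x + t • (z - x))‖ ≤ R := by
          calc ‖P n (x + t • (z - x))‖ ≤ ‖P n (x + t • (z - x)) - v‖ + ‖v‖ := by
                simpa using norm_add_le (P n (x + t • (z - x)) - v) v
            _ ≤ ε + M := add_le_add (hbound n _ hw) hv
            _ = R := by rw [hR_def]; ring
        rw [← smul_sub, norm_smul]
        have := FF_lip hγ0 hγ1 hb1 hb2
        calc ‖z - x‖ * ‖FF γ (P (n+1) (x + t • (z - x))) - FF γ (P n (x + t • (z - x)))‖
            ≤ δ * (L * ‖P (n+1) (x + t • (z - x)) - P n (x + t • (z - x))‖) := by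
              apply mul_le_mul hzx _ (norm_nonneg _) hδ.le
              rw [hL_def]; exact this
          _ ≤ δ * (L * (ε * q^n)) := by
              gcongr
              exact ih _ hw
      calc ‖∫ t in (0:ℝ)..1, ((z - x) • FF γ (P (n+1) (x + t • (z - x)))
            - (z - x) • FF γ (P n (x + t • (z - x))))‖ ≤ δ * (L * (ε * q^n)) * |1 - 0| :=
            intervalIntegral.norm_integral_le_of_norm_le_const key
        _ = ε * q^(n+1) := by rw [show |(1:ℝ) - 0| = 1 by norm_num, mul_one, hq_def]; ring
  -- Cauchy and limit
  have hdist : ∀ z ∈ closedBall x δ, ∀ n, dist (P n z) (P (n+1) z) ≤ ε * q^n := by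
    intro z hz n
    rw [dist_eq_norm, norm_sub_rev]
    exact hcontr n z hz
  have hcauchy : ∀ z ∈ closedBall x δ, CauchySeq (fun n => P n z) := by
    intro z hz
    exact cauchySeq_of_le_geometric q ε hq1 (hdist z hz)
  set f : ℂ → ℂ × ℂ := fun z => limUnder atTop (fun n => P n z) with hf_def
  have htends : ∀ z ∈ closedBall x δ, Tendsto (fun n => P n z) atTop (𝓝 (f z)) := by
    intro z hz
    exact (hcauchy z hz).tendsto_limUnder
  have hgeo : ∀ z ∈ closedBall x δ, ∀ n, dist (P n z) (f z) ≤ ε * q^n / (1-q) := by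
    intro z hz n
    exact dist_le_of_le_geometric_of_tendsto q ε hq1 (hdist z hz) (htends z hz) n
  have hqlim : Tendsto (fun n : ℕ => ε * q^n / (1-q)) atTop (𝓝 0) := by
    have h1 : Tendsto (fun n : ℕ => q^n) atTop (𝓝 0) :=
      tendsto_pow_atTop_nhds_zero_of_lt_one hq0 hq1
    have := (h1.const_mul ε).div_const (1-q)
    simpa using this
  have htu : TendstoUniformlyOn (fun n => P n) f atTop (closedBall x δ) := by
    rw [Metric.tendstoUniformlyOn_iff]
    intro η hη
    filter_upwards [hqlim.eventually (gt_mem_nhds hη)] with n hn z hz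
    calc dist (f z) (P n z) = dist (P n z) (f z) := dist_comm _ _
      _ ≤ ε * q^n / (1-q) := hgeo z hz n
      _ < η := hn
  have hContOn : ContinuousOn f (closedBall x δ) :=
    htu.continuousOn (Eventually.of_forall fun n => (hPc n).continuousOn).frequently
  have hDiffOn : DifferentiableOn ℂ f (ball x δ) := by
    apply TendstoLocallyUniformlyOn.differentiableOn
      ((htu.mono ball_subset_closedBall).tendstoLocallyUniformlyOn)
      (Eventually.of_forall fun n => (hPd n).differentiableOn) isOpen_ball
  have hfb : ∀ z ∈ closedBall x δ, ‖f z - v‖ ≤ ε := by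
    intro z hz
    have h1 : Tendsto (fun n => ‖P n z - v‖) atTop (𝓝 ‖f z - v‖) :=
      ((htends z hz).sub tendsto_const_nhds).norm
    exact le_of_tendsto h1 (Eventually.of_forall fun n => hbound n z hz)
  have hfx : f x = v := by
    have h1 : Tendsto (fun n => P n x) atTop (𝓝 v) := by
      have : (fun n => P n x) = fun _ => v := funext (pic_zero_at γ x v)
      rw [this]; exact tendsto_const_nhds
    exact tendsto_nhds_unique (htends x (mem_closedBall_self hδ.le)) h1
  -- boundedness of f values
  have hfR : ∀ z ∈ closedBall x δ, ‖f z‖ ≤ R := by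
    intro z hz
    calc ‖f z‖ ≤ ‖f z - v‖ + ‖v‖ := by simpa using norm_add_le (f z - v) v
      _ ≤ ε + M := add_le_add (hfb z hz) hv
      _ = R := by rw [hR_def]; ring
  -- fixed point equation
  have hintf : ∀ z : ℂ, z ∈ closedBall x δ → IntervalIntegrable
      (fun t : ℝ => (z - x) • FF γ (f (x + t • (z - x)))) MeasureTheory.volume 0 1 := by
    intro z hz
    apply ContinuousOn.intervalIntegrable
    rw [uIcc_of_le zero_le_one]
    have hpathc : Continuous (fun t : ℝ => x + t • (z - x)) := by fun_prop
    have hmapsf : MapsTo (fun t : ℝ => x + t • (z - x)) (Icc 0 1) (closedBall x δ) :=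
      fun t ht => seg_mem_closedBall hz ht
    exact (((FF_diff γ).continuous.comp_continuousOn
      (hContOn.comp hpathc.continuousOn hmapsf))).const_smul (z - x)
  have hfix : ∀ z ∈ closedBall x δ,
      f z = v + ∫ t in (0:ℝ)..1, (z - x) • FF γ (f (x + t • (z - x))) := by
    intro z hz
    have hzx : ‖z - x‖ ≤ δ := by rwa [mem_closedBall, dist_eq_norm] at hz
    have h1 : Tendsto (fun n => P (n+1) z) atTop (𝓝 (f z)) :=
      (htends z hz).comp (tendsto_add_atTop_nat 1)
    have h2 : Tendsto (fun n => P (n+1) z) atTop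
        (𝓝 (v + ∫ t in (0:ℝ)..1, (z - x) • FF γ (f (x + t • (z - x))))) := by
      have hseq : ∀ n : ℕ, ‖P (n+1) z - (v + ∫ t in (0:ℝ)..1, (z - x) • FF γ (f (x + t • (z - x))))‖
          ≤ δ * (L * (ε * q^n / (1-q))) := by
        intro n
        have heq : P (n+1) z - (v + ∫ t in (0:ℝ)..1, (z - x) • FF γ (f (x + t • (z - x))))
            = ∫ t in (0:ℝ)..1, ((z - x) • FF γ (P n (x + t • (z - x)))
              - (z - x) • FF γ (f (x + t • (z - x)))) := by
          rw [intervalIntegral.integral_sub (hint n z) (hintf z hz)]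
          simp only [hP_def, pic]
          abel
        rw [heq]
        have key : ∀ t ∈ Ι (0:ℝ) 1, ‖(z - x) • FF γ (P n (x + t • (z - x)))
            - (z - x) • FF γ (f (x + t • (z - x)))‖ ≤ δ * (L * (ε * q^n / (1-q))) := by
          intro t ht
          have htI : t ∈ Icc (0:ℝ) 1 := by
            rw [uIoc_of_le zero_le_one] at ht; exact Ioc_subset_Icc_self ht
          have hw := seg_mem_closedBall hz htI
          have hb1 : ‖P n (x + t • (z - x))‖ ≤ R := by
            calc ‖P n (x + t • (z - x))‖ ≤ ‖P n (x + t • (z - x)) - v‖ + ‖v‖ := by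
                  simpa using norm_add_le (P n (x + t • (z - x)) - v) v
              _ ≤ ε + M := add_le_add (hbound n _ hw) hv
              _ = R := by rw [hR_def]; ring
          have hb2 : ‖f (x + t • (z - x))‖ ≤ R := hfR _ hw
          rw [← smul_sub, norm_smul]
          calc ‖z - x‖ * ‖FF γ (P n (x + t • (z - x))) - FF γ (f (x + t • (z - x)))‖
              ≤ δ * (L * ‖P n (x + t • (z - x)) - f (x + t • (z - x))‖) := by
                apply mul_le_mul hzx _ (norm_nonneg _) hδ.le
                rw [hL_def]; exact FF_lip hγ0 hγ1 hb1 hb2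
            _ ≤ δ * (L * (ε * q^n / (1-q))) := by
                gcongr
                rw [← dist_eq_norm]
                exact hgeo _ hw n
        calc ‖∫ t in (0:ℝ)..1, ((z - x) • FF γ (P n (x + t • (z - x)))
              - (z - x) • FF γ (f (x + t • (z - x))))‖ ≤ δ * (L * (ε * q^n / (1-q))) * |1 - 0| :=
              intervalIntegral.norm_integral_le_of_norm_le_const key
          _ = δ * (L * (ε * q^n / (1-q))) := by rw [show |(1:ℝ) - 0| = 1 by norm_num, mul_one]
      rw [tendsto_iff_norm_sub_tendsto_zero]
      apply squeeze_zero_norm (fun n => by simpa using hseq n)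
      have := (hqlim.const_mul (δ * L))
      simp only [mul_zero] at this
      have heq2 : (fun n : ℕ => δ * L * (ε * q ^ n / (1 - q))) = fun n => δ * (L * (ε * q^n / (1-q))) := by
        funext n; ring
      rwa [heq2] at this
    exact tendsto_nhds_unique h1 h2
  -- the ODE
  have hODE : ∀ z₀ ∈ ball x δ, HasDerivAt f (FF γ (f z₀)) z₀ := by
    intro z₀ hz₀
    have hg : DifferentiableOn ℂ (fun w => FF γ (f w)) (ball x δ) :=
      (FF_diff γ).comp_differentiableOn hDiffOn
    have hT := (hasDerivAt_T hg hz₀).const_add v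
    apply hT.congr_of_eventuallyEq
    filter_upwards [isOpen_ball.mem_nhds hz₀] with w hw
    exact hfix w (ball_subset_closedBall hw)
  exact ⟨f, hContOn, hODE, hfb, hfx⟩

lemma FF_lipschitzOnWith {γ R : ℝ} (hγ0 : 0 ≤ γ) (hγ1 : γ ≤ 1) (u : ℂ) :
    LipschitzOnWith (Real.toNNReal (‖u‖ * (3*R^2+1))) (fun y => u • FF γ y)
      (closedBall (0 : ℂ × ℂ) R) := by
  rw [lipschitzOnWith_iff_dist_le_mul]
  intro p hp q hq
  rw [mem_closedBall_zero_iff] at hp hq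
  rw [dist_eq_norm, ← smul_sub, norm_smul, dist_eq_norm]
  rw [Real.coe_toNNReal _ (by positivity)]
  rw [mul_assoc]
  exact mul_le_mul_of_nonneg_left (FF_lip hγ0 hγ1 hp hq) (norm_nonneg u)

lemma uniq_fwd {γ R : ℝ} (hγ0 : 0 ≤ γ) (hγ1 : γ ≤ 1) (u : ℂ) {a b : ℝ} (hab : a ≤ b)
    {g₁ g₂ : ℝ → ℂ × ℂ}
    (h₁ : ∀ t ∈ Icc a b, HasDerivAt g₁ (u • FF γ (g₁ t)) t)
    (hm₁ : ∀ t ∈ Icc a b, ‖g₁ t‖ ≤ R)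
    (h₂ : ∀ t ∈ Icc a b, HasDerivAt g₂ (u • FF γ (g₂ t)) t)
    (hm₂ : ∀ t ∈ Icc a b, ‖g₂ t‖ ≤ R)
    (ha : g₁ a = g₂ a) : g₁ b = g₂ b := by
  have := ODE_solution_unique_of_mem_Icc_right
    (v := fun _ y => u • FF γ y) (s := fun _ => closedBall (0 : ℂ × ℂ) R)
    (K := Real.toNNReal (‖u‖ * (3*R^2+1))) (f := g₁) (g := g₂) (a := a) (b := b)
    (fun _ _ => FF_lipschitzOnWith hγ0 hγ1 u)
    (fun t ht => (h₁ t ht).continuousAt.continuousWithinAt)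
    (fun t ht => (h₁ t (Ico_subset_Icc_self ht)).hasDerivWithinAt)
    (fun t ht => mem_closedBall_zero_iff.2 (hm₁ t (Ico_subset_Icc_self ht)))
    (fun t ht => (h₂ t ht).continuousAt.continuousWithinAt)
    (fun t ht => (h₂ t (Ico_subset_Icc_self ht)).hasDerivWithinAt)
    (fun t ht => mem_closedBall_zero_iff.2 (hm₂ t (Ico_subset_Icc_self ht)))
    ha
  exact this ⟨hab, le_rfl⟩

lemma uniq_bwd {γ R : ℝ} (hγ0 : 0 ≤ γ) (hγ1 : γ ≤ 1) (u : ℂ) {a b : ℝ} (hab : a ≤ b)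
    {g₁ g₂ : ℝ → ℂ × ℂ}
    (h₁ : ∀ t ∈ Icc a b, HasDerivAt g₁ (u • FF γ (g₁ t)) t)
    (hm₁ : ∀ t ∈ Icc a b, ‖g₁ t‖ ≤ R)
    (h₂ : ∀ t ∈ Icc a b, HasDerivAt g₂ (u • FF γ (g₂ t)) t)
    (hm₂ : ∀ t ∈ Icc a b, ‖g₂ t‖ ≤ R)
    (hb : g₁ b = g₂ b) : g₁ a = g₂ a := by
  have := ODE_solution_unique_of_mem_Icc_left
    (v := fun _ y => u • FF γ y) (s := fun _ => closedBall (0 : ℂ × ℂ) R)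
    (K := Real.toNNReal (‖u‖ * (3*R^2+1))) (f := g₁) (g := g₂) (a := a) (b := b)
    (fun _ _ => FF_lipschitzOnWith hγ0 hγ1 u)
    (fun t ht => (h₁ t ht).continuousAt.continuousWithinAt)
    (fun t ht => (h₁ t (Ioc_subset_Icc_self ht)).hasDerivWithinAt)
    (fun t ht => mem_closedBall_zero_iff.2 (hm₁ t (Ioc_subset_Icc_self ht)))
    (fun t ht => (h₂ t ht).continuousAt.continuousWithinAt)
    (fun t ht => (h₂ t (Ioc_subset_Icc_self ht)).hasDerivWithinAt)
    (fun t ht => mem_closedBall_zero_iff.2 (hm₂ t (Ioc_subset_Icc_self ht)))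
    hb
  exact this ⟨le_rfl, hab⟩

/-- derivative of a holomorphic function along a real segment -/
lemma comp_real_deriv {f : ℂ → ℂ × ℂ} {D : ℂ × ℂ} {ζ u : ℂ} {t : ℝ}
    (hf : HasDerivAt f D (ζ + t • u)) :
    HasDerivAt (fun s : ℝ => f (ζ + s • u)) (u • D) t := by
  have hp : HasDerivAt (fun s : ℝ => ζ + s • u) ((1:ℝ) • u) t :=
    ((hasDerivAt_id t).smul_const u).const_add ζ
  have := (hf.hasFDerivAt.restrictScalars ℝ).comp_hasDerivAt t hp
  simp only [one_smul] at this
  exact this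

lemma energy_conservation {γ : ℝ} {C S : ℝ → ℝ}
    (hC : ∀ φ, HasDerivAt C (γ * (S φ ^ 3 - S φ)) φ)
    (hS : ∀ φ, HasDerivAt S (-(C φ ^ 3 - C φ)) φ) (t : ℝ) :
    (C t^2 - 1)^2 + γ*(S t^2 - 1)^2 = (C 0^2 - 1)^2 + γ*(S 0^2 - 1)^2 := by
  set E : ℝ → ℝ := fun t => (C t^2 - 1)^2 + γ*(S t^2 - 1)^2 with hE_def
  have hE : ∀ u : ℝ, HasDerivAt E 0 u := by
    intro u
    have h1 := (((hC u).pow 2).sub_const 1).pow 2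
    have h2 := (((((hS u).pow 2).sub_const 1).pow 2).const_mul γ)
    have h3 := h1.add h2
    have h4 : HasDerivAt E _ u := h3
    convert h4 using 1
    simp only [Pi.pow_apply]
    push_cast
    ring
  have : ∀ u : ℝ, deriv E u = 0 := fun u => (hE u).deriv
  exact is_const_of_deriv_eq_zero (fun u => (hE u).differentiableAt) this t 0

lemma real_bound {γ σ l b : ℝ} (hγ0 : 0 < γ) (hγ1 : γ ≤ 1)
    (hσ : Real.sqrt (1 + (Real.sqrt γ)⁻¹) < σ)
    (hinit :
      (l = 0 ∧ b ∈ Set.Ioo 0 (Real.sqrt (1 - Real.sqrt (1 - γ))) ∪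
        Set.Ioo (Real.sqrt (1 + Real.sqrt (1 - γ)))
          (Real.sqrt (1 + Real.sqrt (γ * σ ^ 2 * (σ ^ 2 - 2))))) ∨
      (l = 0 ∧ |b| ∈ Set.Ioo 1 (Real.sqrt (1 + Real.sqrt (1 - γ)))) ∨
      ((l = -1 ∨ l = 1) ∧ |b| ∈ Set.Ioo 1 (Real.sqrt (1 + Real.sqrt γ))))
    {C S : ℝ → ℝ}
    (hC : ∀ φ, HasDerivAt C (γ * (S φ ^ 3 - S φ)) φ)
    (hS : ∀ φ, HasDerivAt S (-(C φ ^ 3 - C φ)) φ)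
    (hC0 : C 0 = b) (hS0 : S 0 = l) :
    ∃ M₀ : ℝ, 0 ≤ M₀ ∧ M₀ < σ ∧ ∀ t, |C t| ≤ M₀ ∧ |S t| ≤ M₀ := by
  have hsγ : 0 < Real.sqrt γ := Real.sqrt_pos.2 hγ0
  have hsγ1 : Real.sqrt γ ≤ 1 := by
    rw [show (1:ℝ) = Real.sqrt 1 by simp]
    exact Real.sqrt_le_sqrt hγ1
  have hsγsq : Real.sqrt γ ^ 2 = γ := Real.sq_sqrt hγ0.le
  have hinv1 : 1 ≤ (Real.sqrt γ)⁻¹ := by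
    rw [le_inv_comm₀] <;> simp [hsγ, hsγ1]
  have hσ0 : 0 < σ := lt_of_le_of_lt (Real.sqrt_nonneg _) hσ
  have hσsq : 1 + (Real.sqrt γ)⁻¹ < σ^2 := (Real.sqrt_lt' hσ0).1 hσ
  have hσ2 : 2 < σ^2 := by linarith
  have hσ1 : 1 < σ := by nlinarith
  have hkey : 1 < γ * (σ^2 - 1)^2 := by
    have h1 : (Real.sqrt γ)⁻¹ < σ^2 - 1 := by linarith
    have h2 : (Real.sqrt γ)⁻¹ * Real.sqrt γ = 1 := inv_mul_cancel₀ hsγ.ne'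
    have h3 : 1 < (σ^2 - 1) * Real.sqrt γ := by
      calc 1 = (Real.sqrt γ)⁻¹ * Real.sqrt γ := h2.symm
        _ < (σ^2 - 1) * Real.sqrt γ := by
            exact mul_lt_mul_of_pos_right h1 hsγ
    nlinarith [hsγsq, sq_nonneg ((σ^2-1) * Real.sqrt γ - 1)]
  set a : ℝ := (b^2-1)^2 + γ*(l^2-1)^2 with ha_def
  have ha0 : 0 ≤ a := by positivity
  have henergy : ∀ t, (C t^2 - 1)^2 + γ*(S t^2 - 1)^2 = a := by
    intro t
    rw [energy_conservation hC hS t, hC0, hS0]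
  -- generic construction when a < γ (σ²-1)²
  have generic : a < γ * (σ^2-1)^2 → ∃ M₀ : ℝ, 0 ≤ M₀ ∧ M₀ < σ ∧ ∀ t, |C t| ≤ M₀ ∧ |S t| ≤ M₀ := by
    intro ha
    refine ⟨Real.sqrt (1 + Real.sqrt (a/γ)), Real.sqrt_nonneg _, ?_, ?_⟩
    · have h1 : Real.sqrt (a/γ) < σ^2 - 1 := by
        rw [Real.sqrt_lt' (by linarith)]
        rw [div_lt_iff₀ hγ0]
        calc a < γ * (σ^2-1)^2 := ha
          _ = (σ^2-1)^2 * γ := by ring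
      calc Real.sqrt (1 + Real.sqrt (a/γ)) < Real.sqrt (σ^2) := by
            apply Real.sqrt_lt_sqrt (by positivity)
            linarith
        _ = σ := Real.sqrt_sq hσ0.le
    · intro t
      have hsle : Real.sqrt a ≤ Real.sqrt (a/γ) := by
        apply Real.sqrt_le_sqrt
        rw [le_div_iff₀ hγ0]
        exact mul_le_of_le_one_right ha0 hγ1
      have hMsq : Real.sqrt (1 + Real.sqrt (a/γ)) ^ 2 = 1 + Real.sqrt (a/γ) :=
        Real.sq_sqrt (by positivity)
      have step : ∀ X : ℝ, (X-1)^2 ≤ a/γ → X ≤ 1 + Real.sqrt (a/γ) := by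
        intro X hX
        have h1 : X - 1 ≤ |X - 1| := le_abs_self _
        have h2 : |X-1| = Real.sqrt ((X-1)^2) := (Real.sqrt_sq_eq_abs _).symm
        have h3 : Real.sqrt ((X-1)^2) ≤ Real.sqrt (a/γ) := Real.sqrt_le_sqrt hX
        linarith
      have habs : ∀ X : ℝ, X^2 ≤ 1 + Real.sqrt (a/γ) → |X| ≤ Real.sqrt (1 + Real.sqrt (a/γ)) := by
        intro X hX
        have := Real.sqrt_le_sqrt hX
        rwa [Real.sqrt_sq_eq_abs] at this
      have hCt : (C t^2 - 1)^2 ≤ a := by nlinarith [henergy t, sq_nonneg (S t^2 - 1)]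
      have hSt : (S t^2 - 1)^2 ≤ a/γ := by
        rw [le_div_iff₀ hγ0]
        nlinarith [henergy t, sq_nonneg (C t^2 - 1)]
      constructor
      · apply habs
        have h4 : (C t^2 - 1)^2 ≤ a/γ := by
          calc (C t^2 - 1)^2 ≤ a := hCt
            _ ≤ a/γ := by rw [le_div_iff₀ hγ0]; exact mul_le_of_le_one_right ha0 hγ1
        exact step _ h4
      · exact habs _ (step _ hSt)
  rcases hinit with ⟨hl, hb⟩ | ⟨hl, hb⟩ | ⟨hl, hb⟩
  · rcases hb with hb | hb
    · -- class 0 cycle : confinement argument, M₀ = 1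
      obtain ⟨hb0, hbu⟩ := hb
      have hb2 : b^2 < 1 - Real.sqrt (1-γ) := (Real.lt_sqrt hb0.le).1 hbu
      have hsnn : 0 ≤ Real.sqrt (1-γ) := Real.sqrt_nonneg _
      have hb21 : b^2 < 1 := by linarith
      have hb2pos : 0 < (b^2-1)^2 := by nlinarith
      have hkey2 : 1 - γ < (1 - b^2)^2 := by
        rcases le_or_gt 0 (1-γ) with h | h
        · nlinarith [Real.sq_sqrt h]
        · nlinarith [sq_nonneg (1-b^2)]
      have hCd : Differentiable ℝ C := fun t => (hC t).differentiableAt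
      have hSd : Differentiable ℝ S := fun t => (hS t).differentiableAt
      have hCc : Continuous C := hCd.continuous
      have hSc : Continuous S := hSd.continuous
      set w : ℝ → ℝ := fun t => max (C t^2) (S t^2) with hw_def
      have hwcont : Continuous w := ((hCc.pow 2).max (hSc.pow 2))
      have hw0 : w 0 < 1 := by
        simp only [hw_def, hC0, hS0, hl]
        exact max_lt hb21 (by norm_num)
      have hne : ∀ t, w t ≠ 1 := by
        intro t ht
        have hCt2 : C t^2 ≤ 1 := le_trans (le_max_left _ _) ht.le
        have hSt2 : S t^2 ≤ 1 := le_trans (le_max_right _ _) ht.le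
        have hen := henergy t
        have hav : a = (b^2-1)^2 + γ := by rw [ha_def, hl]; ring
        rcases max_choice (C t^2) (S t^2) with h | h
        · have hc1 : C t^2 = 1 := by rw [show C t^2 = w t from h.symm]; exact ht
          have h5 : γ*(S t^2 - 1)^2 = a := by rw [hc1] at hen; linarith
          have hub : (S t^2 - 1)^2 ≤ 1 := by nlinarith [sq_nonneg (S t)]
          nlinarith
        · have hs1 : S t^2 = 1 := by rw [show S t^2 = w t from h.symm]; exact ht
          have h5 : (C t^2 - 1)^2 = a := by rw [hs1] at hen; simp at hen; linarith
          have hub : (C t^2 - 1)^2 ≤ 1 := by nlinarith [sq_nonneg (C t)]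
          nlinarith
      have hconf : ∀ t, w t < 1 := by
        intro t
        by_contra hge
        push_neg at hge
        have hmem : (1:ℝ) ∈ uIcc (w 0) (w t) := by
          rw [mem_uIcc]; exact Or.inl ⟨hw0.le, hge⟩
        obtain ⟨s, _, hs⟩ := intermediate_value_uIcc (a := (0:ℝ)) (b := t)
          hwcont.continuousOn hmem
        exact hne s hs
      refine ⟨1, zero_le_one, hσ1, fun t => ⟨?_, ?_⟩⟩
      · have h1 : C t^2 < 1 := lt_of_le_of_lt (le_max_left _ _) (hconf t)
        nlinarith [sq_abs (C t), abs_nonneg (C t)]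
      · have h1 : S t^2 < 1 := lt_of_le_of_lt (le_max_right _ _) (hconf t)
        nlinarith [sq_abs (S t), abs_nonneg (S t)]
    · -- class 1 outer: generic
      apply generic
      obtain ⟨hbl, hbu⟩ := hb
      have hσ2' : (0:ℝ) ≤ γ * σ^2 * (σ^2 - 2) := by nlinarith
      have hb0 : 0 ≤ b := le_trans (Real.sqrt_nonneg _) hbl.le
      have hbsq : b^2 < 1 + Real.sqrt (γ * σ^2 * (σ^2-2)) := by
        have := (Real.lt_sqrt hb0).1 hbu
        linarith
      have hb1 : 1 < b := by
        have h4 : Real.sqrt 1 ≤ Real.sqrt (1 + Real.sqrt (1-γ)) :=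
          Real.sqrt_le_sqrt (by nlinarith [Real.sqrt_nonneg (1-γ)])
        rw [Real.sqrt_one] at h4
        linarith
      have hb21 : 0 < b^2 - 1 := by nlinarith
      have h2 : (b^2-1)^2 < γ * σ^2 * (σ^2-2) := by
        have h3 : b^2 - 1 < Real.sqrt (γ * σ^2 * (σ^2-2)) := by linarith
        have h5 := pow_lt_pow_left₀ h3 hb21.le two_ne_zero
        rwa [Real.sq_sqrt hσ2'] at h5
      rw [ha_def, hl]
      calc (b^2-1)^2 + γ*((0:ℝ)^2-1)^2 = (b^2-1)^2 + γ := by ring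
        _ < γ * σ^2 * (σ^2-2) + γ := by linarith
        _ = γ*(σ^2-1)^2 := by ring
  · -- class 1 inner: generic
    apply generic
    obtain ⟨hbl, hbu⟩ := hb
    have h1γ : (0:ℝ) ≤ 1 - γ := by
      by_contra h
      push_neg at h
      have h0 : Real.sqrt (1-γ) = 0 := Real.sqrt_eq_zero_of_nonpos (by linarith)
      rw [h0] at hbu
      simp at hbu
      linarith
    have hbsq : b^2 < 1 + Real.sqrt (1-γ) := by
      have := (Real.lt_sqrt (abs_nonneg b)).1 hbu
      rwa [sq_abs] at this
    have hb21 : 0 < b^2 - 1 := by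
      have h4 : 1 < |b|^2 := one_lt_pow₀ hbl two_ne_zero
      rw [sq_abs] at h4; linarith
    have h2 : (b^2-1)^2 < 1 - γ := by
      have h3 : b^2 - 1 < Real.sqrt (1-γ) := by linarith
      have h5 := pow_lt_pow_left₀ h3 hb21.le two_ne_zero
      rwa [Real.sq_sqrt h1γ] at h5
    rw [ha_def, hl]
    calc (b^2-1)^2 + γ*((0:ℝ)^2-1)^2 = (b^2-1)^2 + γ := by ring
      _ < 1 := by linarith
      _ < γ*(σ^2-1)^2 := hkey
  · -- class 2: generic
    apply generic
    obtain ⟨hbl, hbu⟩ := hb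
    have hl2 : l^2 = 1 := by rcases hl with h | h <;> rw [h] <;> ring
    have hbsq : b^2 < 1 + Real.sqrt γ := by
      have := (Real.lt_sqrt (abs_nonneg b)).1 hbu
      rwa [sq_abs] at this
    have hb21 : 0 < b^2 - 1 := by
      have h4 : 1 < |b|^2 := one_lt_pow₀ hbl two_ne_zero
      rw [sq_abs] at h4; linarith
    have h2 : (b^2-1)^2 < γ := by
      have h3 : b^2 - 1 < Real.sqrt γ := by linarith
      have h5 := pow_lt_pow_left₀ h3 hb21.le two_ne_zero
      rwa [hsγsq] at h5
    rw [ha_def, hl2]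
    calc (b^2-1)^2 + γ*((1:ℝ)-1)^2 = (b^2-1)^2 := by ring
      _ < γ := h2
      _ ≤ 1 := hγ1
      _ < γ*(σ^2-1)^2 := hkey

lemma real_pt_mem {x t δ : ℝ} (h : |t - x| < δ) : (t:ℂ) ∈ ball (x:ℂ) δ := by
  rw [mem_ball, dist_eq_norm, ← Complex.ofReal_sub, Complex.norm_real, Real.norm_eq_abs]
  exact h

lemma seg_mem_ball' {x p z : ℂ} {δ : ℝ} (hp : p ∈ ball x δ) (hz : z ∈ ball x δ)
    {t : ℝ} (ht : t ∈ Icc (0:ℝ) 1) : p + t • (z - p) ∈ ball x δ := by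
  rw [mem_ball, dist_eq_norm] at hp hz ⊢
  have key : p + t • (z - p) - x = (1-t) • (p - x) + t • (z - x) := by
    push_cast [Complex.real_smul]
    ring
  rw [key]
  calc ‖(1-t) • (p - x) + t • (z - x)‖ ≤ ‖(1-t) • (p - x)‖ + ‖t • (z - x)‖ := norm_add_le _ _
    _ = (1-t) * ‖p - x‖ + t * ‖z - x‖ := by
        rw [norm_smul, norm_smul, Real.norm_eq_abs, Real.norm_eq_abs,
          abs_of_nonneg (by linarith [ht.2] : (0:ℝ) ≤ 1 - t), abs_of_nonneg ht.1]
    _ < δ := by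
        rcases eq_or_lt_of_le ht.2 with h1 | h1
        · rw [h1]; simpa using hz
        · have hA : (1-t)*‖p-x‖ < (1-t)*δ := by
            apply mul_lt_mul_of_pos_left hp (by linarith)
          have hB : t*‖z-x‖ ≤ t*δ := mul_le_mul_of_nonneg_left hz.le ht.1
          nlinarith [hA, hB]

lemma im_norm (z : ℂ) : ‖z - (z.re : ℂ)‖ = |z.im| := by
  have h : z - (z.re : ℂ) = Complex.I * (z.im : ℂ) := by
    apply Complex.ext <;> simp
  rw [h, norm_mul, Complex.norm_I, one_mul, Complex.norm_real, Real.norm_eq_abs]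

/-- the periodic solution parametrizing a cycle of the unperturbed
system extends holomorphically to a strip `|Im φ| ≤ ϱ`, with the same period,
and with supremum over the closed strip of `max(|Ĉ|,|Ŝ|)` strictly below `σ`. -/
theorem analytic_strip_extension_of_cycles
    (γ σ : ℝ) (hγ : γ ∈ Set.Ioc (0 : ℝ) 1)
    (hσ : Real.sqrt (1 + (Real.sqrt γ)⁻¹) < σ)
    (l b : ℝ)
    (hinit :
      (l = 0 ∧ b ∈ Set.Ioo 0 (Real.sqrt (1 - Real.sqrt (1 - γ))) ∪
        Set.Ioo (Real.sqrt (1 + Real.sqrt (1 - γ)))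
          (Real.sqrt (1 + Real.sqrt (γ * σ ^ 2 * (σ ^ 2 - 2))))) ∨
      (l = 0 ∧ |b| ∈ Set.Ioo 1 (Real.sqrt (1 + Real.sqrt (1 - γ)))) ∨
      ((l = -1 ∨ l = 1) ∧ |b| ∈ Set.Ioo 1 (Real.sqrt (1 + Real.sqrt γ))))
    (C S : ℝ → ℝ) (ω : ℝ) (hω : 0 < ω)
    (hC : ∀ φ : ℝ, HasDerivAt C (γ * (S φ ^ 3 - S φ)) φ)
    (hS : ∀ φ : ℝ, HasDerivAt S (-(C φ ^ 3 - C φ)) φ)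
    (hC0 : C 0 = b) (hS0 : S 0 = l)
    (hper : ∀ φ : ℝ, C (φ + ω) = C φ ∧ S (φ + ω) = S φ) :
    ∃ ϱ : ℝ, 0 < ϱ ∧ ∃ Chat Shat : ℂ → ℂ,
      ContinuousOn Chat {φ : ℂ | |φ.im| ≤ ϱ} ∧
      ContinuousOn Shat {φ : ℂ | |φ.im| ≤ ϱ} ∧
      DifferentiableOn ℂ Chat {φ : ℂ | |φ.im| < ϱ} ∧
      DifferentiableOn ℂ Shat {φ : ℂ | |φ.im| < ϱ} ∧
      (∀ φ : ℂ, |φ.im| ≤ ϱ → Chat (φ + (ω : ℂ)) = Chat φ ∧ Shat (φ + (ω : ℂ)) = Shat φ) ∧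
      (∀ x : ℝ, Chat (x : ℂ) = ((C x : ℝ) : ℂ) ∧ Shat (x : ℂ) = ((S x : ℝ) : ℂ)) ∧
      ∃ M : ℝ, M < σ ∧ ∀ φ : ℂ, |φ.im| ≤ ϱ →
        max ‖Chat φ‖ ‖Shat φ‖ ≤ M := by
  obtain ⟨hγ0, hγ1⟩ := hγ
  obtain ⟨M₀, hM₀0, hM₀σ, hM₀b⟩ := real_bound hγ0 hγ1 hσ hinit hC hS hC0 hS0
  set ε := (σ - M₀)/2 with hε_def
  have hε : 0 < ε := by rw [hε_def]; linarith
  set R := M₀ + ε with hR_def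
  have hR0 : 0 < R := by positivity
  set K := R^3 + R with hK_def
  have hK0 : 0 < K := by positivity
  set L : ℝ := 3*R^2+1 with hL_def
  have hL0 : 0 < L := by positivity
  set δ := min (ε/K) (1/(2*L)) with hδ_def
  have hδ0 : 0 < δ := lt_min (by positivity) (by positivity)
  have hδK : δ * K ≤ ε := by
    calc δ * K ≤ (ε/K) * K := by gcongr; exact min_le_left _ _
      _ = ε := div_mul_cancel₀ ε hK0.ne'
  have hδL : δ * L < 1 := by
    calc δ * L ≤ (1/(2*L)) * L := by gcongr; exact min_le_right _ _
      _ = 1/2 := by field_simp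
      _ < 1 := by norm_num
  set v : ℝ → ℂ × ℂ := fun x => ((C x : ℂ), (S x : ℂ)) with hv_def
  have hvM : ∀ x : ℝ, ‖v x‖ ≤ M₀ := by
    intro x
    rw [hv_def, Prod.norm_def]
    apply max_le
    · rw [Complex.norm_real, Real.norm_eq_abs]; exact (hM₀b x).1
    · rw [Complex.norm_real, Real.norm_eq_abs]; exact (hM₀b x).2
  have hvR : ∀ x : ℝ, ‖v x‖ ≤ R := fun x => le_trans (hvM x) (by rw [hR_def]; linarith)
  choose fsol hf1 hf2 hf3 hf4 using fun x : ℝ =>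
    exists_local_sol (γ := γ) hγ0.le hγ1 hM₀0 hε hδ0 hδK hδL (x : ℂ) (v x) (hvM x)
  have hsolR : ∀ (x : ℝ) (z : ℂ), z ∈ closedBall (x:ℂ) δ → ‖fsol x z‖ ≤ R := by
    intro x z hz
    calc ‖fsol x z‖ ≤ ‖fsol x z - v x‖ + ‖v x‖ := by
          simpa using norm_add_le (fsol x z - v x) (v x)
      _ ≤ ε + M₀ := add_le_add (hf3 x z hz) (hvM x)
      _ = R := by rw [hR_def]; ring
  -- the real solution curve
  have hw : ∀ t : ℝ, HasDerivAt v (FF γ (v t)) t := by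
    intro t
    have h3 := HasDerivAt.prodMk (hC t).ofReal_comp (hS t).ofReal_comp
    convert h3 using 1
    rw [hv_def]
    simp only [FF]
    apply Prod.ext <;> simp [FF] <;> push_cast <;> ring
  -- derivative of fsol along real segments
  have hfseg : ∀ (x : ℝ) (p z : ℂ), p ∈ ball (x:ℂ) δ → z ∈ ball (x:ℂ) δ →
      ∀ t ∈ Icc (0:ℝ) 1, HasDerivAt (fun s : ℝ => fsol x (p + s • (z - p)))
        ((z - p) • FF γ (fsol x (p + t • (z - p)))) t := by
    intro x p z hp hz t ht
    exact comp_real_deriv (hf2 x _ (seg_mem_ball' hp hz ht))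
  -- real agreement
  have hreal : ∀ x p : ℝ, |p - x| < δ → fsol x (p:ℂ) = v p := by
    intro x p hpx
    have hxx : (x:ℂ) ∈ ball (x:ℂ) δ := mem_ball_self hδ0
    have hpp : (p:ℂ) ∈ ball (x:ℂ) δ := real_pt_mem hpx
    -- parametrize the segment from x to p
    have key := fun (t : ℝ) (ht : t ∈ Icc (0:ℝ) 1) =>
      hfseg x (x:ℂ) (p:ℂ) hxx hpp t ht
    set g₁ : ℝ → ℂ × ℂ := fun s => fsol x ((x:ℂ) + s • ((p:ℂ) - (x:ℂ))) with hg₁_def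
    set g₂ : ℝ → ℂ × ℂ := fun s => v (x + s * (p - x)) with hg₂_def
    have hg₂d : ∀ t ∈ Icc (0:ℝ) 1, HasDerivAt g₂ (((p:ℂ) - (x:ℂ)) • FF γ (g₂ t)) t := by
      intro t ht
      -- chain rule for the real curve
      have h1 : HasDerivAt (fun s : ℝ => x + s * (p - x)) (p - x) t := by
        have := ((hasDerivAt_id t).const_mul (p - x)).const_add x
        simpa [mul_comm] using this
      have h2 := (hw (x + t * (p - x))).hasFDerivAt.restrictScalars ℝ |>.comp_hasDerivAt t h1
      rw [hg₂_def]
      replace h2 : HasDerivAt (fun s => v (x + s * (p - x))) _ t := h2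
      refine h2.congr_deriv ?_
      rw [show ((p:ℂ) - (x:ℂ)) = ((p - x : ℝ) : ℂ) by push_cast; ring,
        show ((p - x : ℝ) : ℂ) = algebraMap ℝ ℂ (p - x) from rfl, algebraMap_smul]
      simp
    have hg₂m : ∀ t ∈ Icc (0:ℝ) 1, ‖g₂ t‖ ≤ R := fun t _ => hvR _
    have hg₁m : ∀ t ∈ Icc (0:ℝ) 1, ‖g₁ t‖ ≤ R := by
      intro t ht
      exact hsolR x _ (ball_subset_closedBall (seg_mem_ball' hxx hpp ht))
    have hinit0 : g₁ 0 = g₂ 0 := by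
      rw [hg₁_def, hg₂_def]
      simp [hf4 x]
    have := uniq_fwd hγ0.le hγ1 ((p:ℂ) - (x:ℂ)) zero_le_one key hg₁m hg₂d hg₂m hinit0
    rw [hg₁_def, hg₂_def] at this
    simpa using this
  -- consistency of local solutions
  have hcons : ∀ x y : ℝ, |x - y| < δ → ∀ z : ℂ, z ∈ ball ((x:ℝ):ℂ) δ →
      z ∈ ball ((y:ℝ):ℂ) δ → fsol x z = fsol y z := by
    intro x y hxy z hzx hzy
    set p : ℝ := (x + y)/2 with hp_def
    have hpx : |p - x| < δ := by
      rw [show p - x = -((x - y)/2) by rw [hp_def]; ring, abs_neg, abs_div]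
      rw [abs_of_pos (by norm_num : (0:ℝ) < 2)]
      linarith [abs_nonneg (x - y)]
    have hpy : |p - y| < δ := by
      rw [show p - y = (x - y)/2 by rw [hp_def]; ring, abs_div]
      rw [abs_of_pos (by norm_num : (0:ℝ) < 2)]
      linarith [abs_nonneg (x - y)]
    have hpmx : (p:ℂ) ∈ ball ((x:ℝ):ℂ) δ := real_pt_mem hpx
    have hpmy : (p:ℂ) ∈ ball ((y:ℝ):ℂ) δ := real_pt_mem hpy
    have hinit0 : fsol x ((p:ℂ) + (0:ℝ) • (z - (p:ℂ))) = fsol y ((p:ℂ) + (0:ℝ) • (z - (p:ℂ))) := by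
      simp only [zero_smul, add_zero]
      rw [hreal x p hpx, hreal y p hpy]
    have key := uniq_fwd hγ0.le hγ1 (z - (p:ℂ)) zero_le_one
      (hfseg x (p:ℂ) z hpmx hzx)
      (fun t ht => hsolR x _ (ball_subset_closedBall (seg_mem_ball' hpmx hzx ht)))
      (hfseg y (p:ℂ) z hpmy hzy)
      (fun t ht => hsolR y _ (ball_subset_closedBall (seg_mem_ball' hpmy hzy ht)))
      hinit0
    simpa using key
  -- periodicity of local solutions
  have hper2 : ∀ x : ℝ, ∀ z ∈ ball ((x:ℝ):ℂ) δ, fsol (x + ω) (z + (ω:ℂ)) = fsol x z := by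
    intro x z hz
    have hxx : ((x:ℝ):ℂ) ∈ ball ((x:ℝ):ℂ) δ := mem_ball_self hδ0
    have hxω : (((x + ω :ℝ)):ℂ) ∈ ball (((x + ω:ℝ)):ℂ) δ := mem_ball_self hδ0
    have hzω : z + (ω:ℂ) ∈ ball (((x + ω:ℝ)):ℂ) δ := by
      rw [mem_ball, dist_eq_norm] at hz ⊢
      rw [show z + (ω:ℂ) - ((x + ω:ℝ):ℂ) = z - ((x:ℝ):ℂ) by push_cast; ring]
      exact hz
    have hu : (z + (ω:ℂ)) - ((x + ω:ℝ):ℂ) = z - ((x:ℝ):ℂ) := by push_cast; ring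
    have hd1 := hfseg (x + ω) (((x + ω:ℝ)):ℂ) (z + (ω:ℂ)) hxω hzω
    rw [hu] at hd1
    have hd2 := hfseg x ((x:ℝ):ℂ) z hxx hz
    have hinit0 : fsol (x+ω) (((x + ω:ℝ):ℂ) + (0:ℝ) • (z - ((x:ℝ):ℂ)))
        = fsol x (((x:ℝ):ℂ) + (0:ℝ) • (z - ((x:ℝ):ℂ))) := by
      simp only [zero_smul, add_zero]
      rw [hf4 (x+ω), hf4 x, hv_def]
      exact Prod.ext (by simp [(hper x).1]) (by simp [(hper x).2])
    have key := uniq_fwd hγ0.le hγ1 (z - ((x:ℝ):ℂ)) zero_le_one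
      hd1
      (fun t ht => by
        apply hsolR (x+ω) _ (ball_subset_closedBall _)
        have hm := seg_mem_ball' hxω hzω ht
        rwa [hu] at hm)
      hd2
      (fun t ht => hsolR x _ (ball_subset_closedBall (seg_mem_ball' hxx hz ht)))
      hinit0
    have h1 : ((x + ω:ℝ):ℂ) + (1:ℝ) • (z - ((x:ℝ):ℂ)) = z + (ω:ℂ) := by
      push_cast [Complex.real_smul]; ring
    have h2 : ((x:ℝ):ℂ) + (1:ℝ) • (z - ((x:ℝ):ℂ)) = z := by
      push_cast [Complex.real_smul]; ring
    rw [h1, h2] at key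
    exact key
  -- membership of strip points
  have hmem1 : ∀ z : ℂ, |z.im| < δ → z ∈ ball ((z.re:ℝ):ℂ) δ := by
    intro z hz
    rw [mem_ball, dist_eq_norm, im_norm]
    exact hz
  have hmem1' : ∀ z : ℂ, |z.im| ≤ δ → z ∈ closedBall ((z.re:ℝ):ℂ) δ := by
    intro z hz
    rw [mem_closedBall, dist_eq_norm, im_norm]
    exact hz
  set G : ℂ → ℂ × ℂ := fun z => fsol z.re z with hG_def
  -- local glue
  have hglue : ∀ z₀ : ℂ, |z₀.im| < δ → ∀ᶠ z in 𝓝 z₀, G z = fsol z₀.re z := by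
    intro z₀ h0
    set ρ := (δ - |z₀.im|)/2 with hρ_def
    have hρ : 0 < ρ := by rw [hρ_def]; linarith
    filter_upwards [ball_mem_nhds z₀ hρ] with z hzρ
    rw [mem_ball, dist_eq_norm] at hzρ
    have him : |z.im| < δ := by
      have h1 : |z.im - z₀.im| ≤ ‖z - z₀‖ := by
        rw [show z.im - z₀.im = (z - z₀).im by simp]
        exact Complex.abs_im_le_norm (z - z₀)
      have h2 : |z.im| ≤ |z₀.im| + |z.im - z₀.im| := by
        have h3 := abs_sub_abs_le_abs_sub z.im z₀.im
        linarith [abs_nonneg (z.im - z₀.im)]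
      rw [hρ_def] at hzρ
      linarith
    have hre : |z.re - z₀.re| < δ := by
      have h1 : |z.re - z₀.re| ≤ ‖z - z₀‖ := by
        rw [show z.re - z₀.re = (z - z₀).re by simp]
        exact Complex.abs_re_le_norm (z - z₀)
      have h4 : ρ ≤ δ := by rw [hρ_def]; linarith [abs_nonneg z₀.im]
      linarith
    have hz1 : z ∈ ball ((z.re:ℝ):ℂ) δ := hmem1 z him
    have hz2 : z ∈ ball ((z₀.re:ℝ):ℂ) δ := by
      rw [mem_ball, dist_eq_norm]
      calc ‖z - (z₀.re:ℂ)‖ ≤ ‖z - z₀‖ + ‖z₀ - (z₀.re:ℂ)‖ := by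
            simpa using norm_add_le (z - z₀) (z₀ - (z₀.re:ℂ))
        _ < ρ + |z₀.im| := by rw [im_norm z₀]; linarith
        _ ≤ δ := by rw [hρ_def]; linarith
    exact hcons z.re z₀.re hre z hz1 hz2
  have hGdiffAt : ∀ z₀ : ℂ, |z₀.im| < δ → DifferentiableAt ℂ G z₀ := by
    intro z₀ h0
    have hd : DifferentiableAt ℂ (fsol z₀.re) z₀ :=
      (hf2 z₀.re z₀ (hmem1 z₀ h0)).differentiableAt
    exact hd.congr_of_eventuallyEq (hglue z₀ h0)
  set ϱ := δ/2 with hϱ_def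
  have hϱ0 : 0 < ϱ := by rw [hϱ_def]; linarith
  have hϱδ : ϱ < δ := by rw [hϱ_def]; linarith
  refine ⟨ϱ, hϱ0, fun z => (G z).1, fun z => (G z).2, ?_, ?_, ?_, ?_, ?_, ?_, ?_⟩
  · intro z hz
    exact (((hGdiffAt z (lt_of_le_of_lt hz hϱδ)).continuousAt).fst).continuousWithinAt
  · intro z hz
    exact (((hGdiffAt z (lt_of_le_of_lt hz hϱδ)).continuousAt).snd).continuousWithinAt
  · intro z hz
    exact ((hGdiffAt z (lt_trans hz hϱδ)).fst).differentiableWithinAt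
  · intro z hz
    exact ((hGdiffAt z (lt_trans hz hϱδ)).snd).differentiableWithinAt
  · intro φ hφ
    have h0 : |φ.im| < δ := lt_of_le_of_lt hφ hϱδ
    have hGper : G (φ + (ω:ℂ)) = G φ := by
      rw [hG_def]
      have h1 : (φ + (ω:ℂ)).re = φ.re + ω := by simp
      show fsol ((φ + (ω:ℂ)).re) (φ + (ω:ℂ)) = fsol φ.re φ
      rw [h1]
      exact hper2 φ.re φ (hmem1 φ h0)
    constructor
    · show (G (φ + (ω:ℂ))).1 = (G φ).1
      rw [hGper]
    · show (G (φ + (ω:ℂ))).2 = (G φ).2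
      rw [hGper]
  · intro x
    have h2 : G (x:ℂ) = v x := by
      rw [hG_def]
      show fsol ((x:ℂ)).re (x:ℂ) = v x
      rw [Complex.ofReal_re x]
      exact hf4 x
    constructor
    · show (G ((x:ℝ):ℂ)).1 = _
      rw [h2]
    · show (G ((x:ℝ):ℂ)).2 = _
      rw [h2]
  · refine ⟨M₀ + ε, by rw [hε_def]; linarith, ?_⟩
    intro φ hφ
    have hcb : φ ∈ closedBall ((φ.re:ℝ):ℂ) δ := hmem1' φ (le_trans hφ (by linarith))
    have hGR : ‖G φ‖ ≤ R := hsolR φ.re φ hcb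
    apply max_le
    · calc ‖(G φ).1‖ = ‖(G φ).1‖ := rfl
        _ ≤ ‖G φ‖ := norm_fst_le _
        _ ≤ M₀ + ε := by rw [← hR_def]; exact hGR
    · calc ‖(G φ).2‖ = ‖(G φ).2‖ := rfl
        _ ≤ ‖G φ‖ := norm_snd_le _
        _ ≤ M₀ + ε := by rw [← hR_def]; exact hGR
end AnalyticStripExtensionAux
end

section
/- Let γ ∈ (0,1] and let (C,S) be the solution of the unperturbed system with C(0) = b, S(0) = 0, and set α(φ) = C'(φ)S(φ) − C(φ)S'(φ). If b ∈ (0, r^i) then α(φ) < 0 for all φ ∈ ℝ, and if b ∈ (r^e, ∞) then α(φ) > 0 for all φ ∈ ℝ. -/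
open Set Real

set_option maxHeartbeats 1000000

/-- A real function whose derivative is dominated by `7 * |f|` and which vanishes
somewhere, vanishes everywhere to the right. -/
lemma gron_fwd (f f' : ℝ → ℝ) (hf : ∀ t, HasDerivAt f (f' t) t)
    (hb : ∀ t, |f' t| ≤ 7 * |f t|) (a : ℝ) (ha : f a = 0) (t : ℝ) (hat : a ≤ t) :
    f t = 0 := by
  have hcont : ContinuousOn f (Icc a t) :=
    (Differentiable.continuous (fun x => (hf x).differentiableAt)).continuousOn
  have h := norm_le_gronwallBound_of_norm_deriv_right_le (δ := 0) (K := 7) (ε := 0)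
    hcont (fun x _ => (hf x).hasDerivWithinAt)
    (by simp [ha]) (fun x _ => by simpa [Real.norm_eq_abs] using hb x)
    t (by simp [hat])
  rw [gronwallBound_ε0_δ0] at h
  have := abs_nonneg (f t)
  rw [Real.norm_eq_abs] at h
  have : |f t| = 0 := le_antisymm h (abs_nonneg _)
  exact abs_eq_zero.mp this

lemma gron_aux (f f' : ℝ → ℝ) (hf : ∀ t, HasDerivAt f (f' t) t)
    (hb : ∀ t, |f' t| ≤ 7 * |f t|) (a : ℝ) (ha : f a = 0) (t : ℝ) : f t = 0 := by
  rcases le_total a t with h | h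
  · exact gron_fwd f f' hf hb a ha t h
  · -- time reversal
    set g : ℝ → ℝ := fun τ => f (2 * a - τ) with hg
    have hg' : ∀ τ, HasDerivAt g (-(f' (2 * a - τ))) τ := by
      intro τ
      have h1 : HasDerivAt (fun x : ℝ => 2 * a - x) (-1) τ := by
        simpa using (hasDerivAt_id τ).const_sub (2 * a)
      have h2 := (hf (2 * a - τ)).comp τ h1
      have h3 : HasDerivAt g (f' (2 * a - τ) * (-1)) τ := h2
      simpa using h3
    have hgb : ∀ τ, |(-(f' (2 * a - τ)))| ≤ 7 * |g τ| := by
      intro τ; rw [abs_neg]; exact hb _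
    have := gron_fwd g _ hg' hgb a (by simp [hg, ha, two_mul]) (2 * a - t) (by linarith)
    simpa [hg] using this

/-- sign of the monotonicity indicator
`α₀₀(φ) = C'(φ)S(φ) − C(φ)S'(φ)` along class-0 cycles: negative on the inner
cycles (`b ∈ (0, r^i)`) and positive on the outer ones (`b > r^e`). -/
theorem alpha_sign_class_zero
    (γ : ℝ) (hγ : γ ∈ Set.Ioc (0 : ℝ) 1) (b : ℝ)
    (C S : ℝ → ℝ)
    (hC : ∀ φ : ℝ, HasDerivAt C (γ * (S φ ^ 3 - S φ)) φ)
    (hS : ∀ φ : ℝ, HasDerivAt S (-(C φ ^ 3 - C φ)) φ)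
    (hC0 : C 0 = b) (hS0 : S 0 = 0) :
    (b ∈ Set.Ioo 0 (Real.sqrt (1 - Real.sqrt (1 - γ))) →
      ∀ φ : ℝ, deriv C φ * S φ - C φ * deriv S φ < 0) ∧
    (Real.sqrt (1 + Real.sqrt (1 - γ)) < b →
      ∀ φ : ℝ, 0 < deriv C φ * S φ - C φ * deriv S φ) := by
  obtain ⟨hγ0, hγ1⟩ := hγ
  have h1γ : (0:ℝ) ≤ 1 - γ := by linarith
  have hsq : Real.sqrt (1 - γ) ^ 2 = 1 - γ := Real.sq_sqrt h1γ
  have hsqnn : (0:ℝ) ≤ Real.sqrt (1 - γ) := Real.sqrt_nonneg _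
  set a := (b ^ 2 - 1) ^ 2 with hadef
  -- the indicator as a polynomial function
  set A : ℝ → ℝ := fun φ => γ * (S φ ^ 4 - S φ ^ 2) + (C φ ^ 4 - C φ ^ 2) with hA
  have hAeq : ∀ φ, deriv C φ * S φ - C φ * deriv S φ = A φ := by
    intro φ
    rw [(hC φ).deriv, (hS φ).deriv]
    simp only [hA]; ring
  -- conservation of K
  have hKder : ∀ φ, HasDerivAt (fun t => (C t ^ 2 - 1) ^ 2 + γ * (S t ^ 2 - 1) ^ 2) 0 φ := by
    intro φ
    have h1 := (((hC φ).fun_pow 2).sub_const 1).fun_pow 2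
    have h2 := ((((hS φ).fun_pow 2).sub_const 1).fun_pow 2).const_mul γ
    have h3 := h1.fun_add h2
    refine h3.congr_deriv ?_
    push_cast
    ring
  have hK : ∀ φ, (C φ ^ 2 - 1) ^ 2 + γ * (S φ ^ 2 - 1) ^ 2 = a + γ := by
    intro φ
    have hconst := is_const_of_deriv_eq_zero
      (f := fun t => (C t ^ 2 - 1) ^ 2 + γ * (S t ^ 2 - 1) ^ 2)
      (fun x => (hKder x).differentiableAt) (fun x => (hKder x).deriv) φ 0
    rw [hconst, hC0, hS0, hadef]
    ring
  -- continuity of A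
  have hAcont : Continuous A := by
    have hCc : Continuous C := Differentiable.continuous (fun φ => (hC φ).differentiableAt)
    have hSc : Continuous S := Differentiable.continuous (fun φ => (hS φ).differentiableAt)
    rw [hA]
    exact (continuous_const.mul ((hSc.pow 4).sub (hSc.pow 2))).add
      ((hCc.pow 4).sub (hCc.pow 2))
  -- nonvanishing when 1 - γ < a < 1
  have hne1 : 1 - γ < a → a < 1 → ∀ φ, A φ ≠ 0 := by
    intro h1 h2 φ h0
    have hKφ := hK φ
    set x := C φ with hx; set y := S φ with hy
    have hx2 : (0:ℝ) ≤ x ^ 2 := sq_nonneg _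
    have hy2 : (0:ℝ) ≤ y ^ 2 := sq_nonneg _
    simp only [hA] at h0
    -- P = x² + γy² = 1 - a ; Q = x⁴ + γ y⁴ = 1 - a
    have eQ : x ^ 4 + γ * y ^ 4 = x ^ 2 + γ * y ^ 2 := by linarith [h0]
    have eP : x ^ 2 + γ * y ^ 2 = 1 - a := by nlinarith [hKφ, eQ]
    have hux : γ * x ^ 2 ≤ 1 - a := by nlinarith
    have huy : γ * y ^ 2 ≤ 1 - a := by nlinarith
    have h3 : x ^ 2 * (γ * x ^ 2 - (1 - a)) ≤ 0 :=
      mul_nonpos_of_nonneg_of_nonpos hx2 (by linarith)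
    have h4 : (γ * y ^ 2) * (γ * y ^ 2 - (1 - a)) ≤ 0 :=
      mul_nonpos_of_nonneg_of_nonpos (by positivity) (by linarith)
    -- γ(1-a) ≤ (1-a)² hence γ ≤ 1-a, contradiction with 1-γ < a
    nlinarith [h3, h4, eQ, eP]
  -- nonvanishing when a ≥ 1 forces the origin
  have hne2 : 1 ≤ a → ∀ φ, A φ = 0 → C φ = 0 ∧ S φ = 0 := by
    intro h1 φ h0
    have hKφ := hK φ
    set x := C φ; set y := S φ
    have hx2 : (0:ℝ) ≤ x ^ 2 := sq_nonneg _
    have hy2 : (0:ℝ) ≤ y ^ 2 := sq_nonneg _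
    simp only [hA] at h0
    have eQ : x ^ 4 + γ * y ^ 4 = x ^ 2 + γ * y ^ 2 := by linarith [h0]
    have eP : x ^ 2 + γ * y ^ 2 = 1 - a := by nlinarith [hKφ, eQ]
    have hxx : x ^ 2 = 0 := by nlinarith
    have hyy : y ^ 2 = 0 := by nlinarith
    exact ⟨pow_eq_zero_iff (n := 2) (by norm_num) |>.mp hxx,
      pow_eq_zero_iff (n := 2) (by norm_num) |>.mp hyy⟩
  -- Gronwall: if trajectory hits origin, then b = 0
  have horigin : ∀ φ₀, C φ₀ = 0 → S φ₀ = 0 → b = 0 := by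
    intro φ₀ hc0 hs0
    -- conserved value is then 1 + γ, giving uniform bounds
    have hKval : a + γ = 1 + γ := by
      have := hK φ₀; rw [hc0, hs0] at this; nlinarith [this]
    have hCb : ∀ φ, C φ ^ 2 ≤ 3 := by
      intro φ
      have := hK φ; rw [hKval] at this
      nlinarith [sq_nonneg (S φ ^ 2 - 1), sq_nonneg (C φ), sq_nonneg (C φ ^ 2 - 1)]
    have hSb : ∀ φ, γ * S φ ^ 2 ≤ 3 := by
      intro φ
      have hkφ := hK φ; rw [hKval] at hkφ
      have h5 : γ * (S φ ^ 2 - 1) ^ 2 ≤ 2 := by nlinarith [sq_nonneg (C φ ^ 2 - 1)]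
      nlinarith [sq_nonneg (γ * S φ ^ 2 - γ), sq_nonneg (S φ), mul_nonneg hγ0.le (sq_nonneg (S φ))]
    set ρ : ℝ → ℝ := fun t => C t ^ 2 + S t ^ 2 with hρ
    set ρ' : ℝ → ℝ := fun t =>
      2 * C t * (γ * (S t ^ 3 - S t)) + 2 * S t * (-(C t ^ 3 - C t)) with hρ'
    have hρd : ∀ t, HasDerivAt ρ (ρ' t) t := by
      intro t
      have := ((hC t).fun_pow 2).fun_add ((hS t).fun_pow 2)
      refine this.congr_deriv ?_
      simp only [hρ']; push_cast; ring
    have hρb : ∀ t, |ρ' t| ≤ 7 * |ρ t| := by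
      intro t
      set x := C t; set y := S t
      have hxy : |2 * x * y| ≤ x ^ 2 + y ^ 2 := by
        rw [abs_le]; constructor <;> nlinarith [sq_nonneg (x + y), sq_nonneg (x - y)]
      have hex : |γ * y ^ 2 - x ^ 2 + 1 - γ| ≤ 7 := by
        rw [abs_le]
        constructor <;> nlinarith [hCb t, hSb t, sq_nonneg x, mul_nonneg hγ0.le (sq_nonneg y)]
      have hrw : ρ' t = (2 * x * y) * (γ * y ^ 2 - x ^ 2 + 1 - γ) := by
        simp only [hρ']; ring
      have hρnn : (0:ℝ) ≤ ρ t := by positivity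
      calc |ρ' t| = |2 * x * y| * |γ * y ^ 2 - x ^ 2 + 1 - γ| := by rw [hrw, abs_mul]
        _ ≤ (x ^ 2 + y ^ 2) * 7 := mul_le_mul hxy hex (abs_nonneg _) (by positivity)
        _ = 7 * ρ t := by simp only [hρ]; ring
        _ ≤ 7 * |ρ t| := by rw [abs_of_nonneg hρnn]
    have hρ0 : ρ 0 = 0 :=
      gron_aux ρ ρ' hρd hρb φ₀ (by simp [hρ, hc0, hs0]) 0
    simp only [hρ] at hρ0
    have : C 0 ^ 2 = 0 := by nlinarith [sq_nonneg (C 0), sq_nonneg (S 0), hρ0]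
    rw [hC0] at this
    exact pow_eq_zero_iff (n := 2) (by norm_num) |>.mp this
  -- sign propagation via IVT
  have hsign : ∀ (hz : ∀ φ, A φ ≠ 0),
      (A 0 < 0 → ∀ φ, A φ < 0) ∧ (0 < A 0 → ∀ φ, 0 < A φ) := by
    intro hz
    constructor
    · intro h0 φ
      by_contra hcon
      push_neg at hcon
      have hmem : (0:ℝ) ∈ Set.uIcc (A 0) (A φ) := Set.mem_uIcc.mpr (Or.inl ⟨h0.le, hcon⟩)
      obtain ⟨c, _, hc⟩ := intermediate_value_uIcc (hAcont.continuousOn) hmem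
      exact hz c hc
    · intro h0 φ
      by_contra hcon
      push_neg at hcon
      have hmem : (0:ℝ) ∈ Set.uIcc (A 0) (A φ) := Set.mem_uIcc.mpr (Or.inr ⟨hcon, h0.le⟩)
      obtain ⟨c, _, hc⟩ := intermediate_value_uIcc (hAcont.continuousOn) hmem
      exact hz c hc
  constructor
  · -- inner case
    rintro ⟨hb0, hbr⟩ φ
    rw [hAeq]
    have hb2 : b ^ 2 < 1 - Real.sqrt (1 - γ) := by
      have h := Real.sq_sqrt (show (0:ℝ) ≤ 1 - Real.sqrt (1 - γ) by
        nlinarith [Real.sqrt_nonneg (1 - Real.sqrt (1 - γ)), hb0.trans hbr])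
      nlinarith [hbr, hb0, Real.sqrt_nonneg (1 - Real.sqrt (1 - γ))]
    have ha1 : 1 - γ < a := by
      simp only [hadef]
      nlinarith [hb2, hsq, hsqnn, sq_nonneg b]
    have ha2 : a < 1 := by
      simp only [hadef]
      nlinarith [hb2, hsqnn, sq_nonneg b, hb0]
    have hz := hne1 ha1 ha2
    have hA0 : A 0 < 0 := by
      simp only [hA, hC0, hS0]
      nlinarith [hb0, hb2, hsqnn]
    exact (hsign hz).1 hA0 φ
  · -- outer case
    intro hbr φ
    rw [hAeq]
    have hrnn : (0:ℝ) ≤ Real.sqrt (1 + Real.sqrt (1 - γ)) := Real.sqrt_nonneg _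
    have hb0 : 0 < b := lt_of_le_of_lt hrnn hbr
    have hb2 : 1 + Real.sqrt (1 - γ) < b ^ 2 := by
      have h := Real.sq_sqrt (show (0:ℝ) ≤ 1 + Real.sqrt (1 - γ) by linarith)
      nlinarith [hbr, hrnn]
    have ha1 : 1 - γ < a := by
      simp only [hadef]
      nlinarith [hb2, hsq, hsqnn]
    have hz : ∀ ψ, A ψ ≠ 0 := by
      rcases lt_or_ge a 1 with h | h
      · exact hne1 ha1 h
      · intro ψ h0
        obtain ⟨hc0, hs0⟩ := hne2 h ψ h0
        have := horigin ψ hc0 hs0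
        linarith
    have hb1 : 1 < b ^ 2 := by nlinarith [hb2, hsqnn]
    have hA0 : 0 < A 0 := by
      simp only [hA, hC0, hS0]
      nlinarith [hb1, hb0]
    exact (hsign hz).2 hA0 φ
end

section
/- Let γ ∈ (0,1], k, l ∈ {−1,1}, and let b satisfy kb ∈ (1, r^s). Let (C,S) be the solution of the unperturbed system with C(0) = b, S(0) = l. Then α(φ) = C'(φ)(S(φ) − l) − (C(φ) − k)S'(φ) > 0 for all φ ∈ ℝ. -/
set_option maxHeartbeats 1000000

private lemma sign_keep (g : ℝ → ℝ) (hg : Continuous g) (h0 : 0 < g 0)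
    (hne : ∀ x, g x ≠ 0) : ∀ x, 0 < g x := by
  intro x
  by_contra h
  push_neg at h
  have hlt : g x < 0 := lt_of_le_of_ne h (hne x)
  have hmem : (0:ℝ) ∈ Set.uIcc (g 0) (g x) :=
    Set.mem_uIcc.mpr (Or.inr ⟨hlt.le, h0.le⟩)
  obtain ⟨c, _, hc⟩ := intermediate_value_uIcc hg.continuousOn hmem
  exact hne c hc

private lemma aux_nonneg (u : ℝ) (hu : 0 < u) : 0 ≤ (u - 1) * (u^3 - u) := by
  nlinarith [mul_nonneg (mul_nonneg hu.le (by linarith : (0:ℝ) ≤ u + 1)) (sq_nonneg (u - 1))]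

private lemma aux_pos (u : ℝ) (hu : 0 < u) (hne : u ≠ 1) :
    0 < (u - 1) * (u^3 - u) := by
  have h1 : (u - 1)^2 > 0 := by
    have : u - 1 ≠ 0 := sub_ne_zero.mpr hne
    positivity
  nlinarith [mul_pos (mul_pos hu (by linarith : (0:ℝ) < u + 1)) h1]

private lemma term_nonneg (k c : ℝ) (hk : k = -1 ∨ k = 1) (h : 0 < k * c) :
    0 ≤ (c - k) * (c^3 - c) := by
  rcases hk with rfl | rfl
  · have hc : 0 < -c := by linarith [h]
    have := aux_nonneg (-c) hc
    nlinarith [this]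
  · have hc : 0 < c := by linarith [h]
    have := aux_nonneg c hc
    nlinarith [this]

private lemma term_pos (k c : ℝ) (hk : k = -1 ∨ k = 1) (h : 0 < k * c)
    (hne : c ≠ k) : 0 < (c - k) * (c^3 - c) := by
  rcases hk with rfl | rfl
  · have hc : 0 < -c := by linarith [h]
    have hne' : -c ≠ 1 := by intro h'; apply hne; linarith
    have := aux_pos (-c) hc hne'
    nlinarith [this]
  · have hc : 0 < c := by linarith [h]
    have := aux_pos c hc hne
    nlinarith [this]

/-- the monotonicity indicator
`α_{kl}(φ) = C'(φ)(S(φ) − l) − (C(φ) − k)S'(φ)` is positive along any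
class-2 cycle (`k, l ∈ {−1,1}`, `kb ∈ (1, r^s)`). -/
theorem alpha_positive_class_two
    (γ : ℝ) (hγ : γ ∈ Set.Ioc (0 : ℝ) 1)
    (k l b : ℝ) (hk : k = -1 ∨ k = 1) (hl : l = -1 ∨ l = 1)
    (hb : k * b ∈ Set.Ioo 1 (Real.sqrt (1 + Real.sqrt γ)))
    (C S : ℝ → ℝ)
    (hC : ∀ φ : ℝ, HasDerivAt C (γ * (S φ ^ 3 - S φ)) φ)
    (hS : ∀ φ : ℝ, HasDerivAt S (-(C φ ^ 3 - C φ)) φ)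
    (hC0 : C 0 = b) (hS0 : S 0 = l) :
    ∀ φ : ℝ, 0 < deriv C φ * (S φ - l) - (C φ - k) * deriv S φ := by
  obtain ⟨hγ0, hγ1⟩ := hγ
  obtain ⟨hb1, hb2⟩ := hb
  have hk2 : k^2 = 1 := by rcases hk with rfl | rfl <;> norm_num
  have hl2 : l^2 = 1 := by rcases hl with rfl | rfl <;> norm_num
  have hk0 : k ≠ 0 := by rcases hk with rfl | rfl <;> norm_num
  have hl0 : l ≠ 0 := by rcases hl with rfl | rfl <;> norm_num
  have hsγpos : 0 < Real.sqrt γ := Real.sqrt_pos.mpr hγ0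
  have hsγ2 : Real.sqrt γ ^ 2 = γ := Real.sq_sqrt hγ0.le
  have hroot : (0:ℝ) ≤ 1 + Real.sqrt γ := by positivity
  have hroot2 : Real.sqrt (1 + Real.sqrt γ) ^ 2 = 1 + Real.sqrt γ :=
    Real.sq_sqrt hroot
  have hbsq : b^2 = (k*b)^2 := by nlinarith [hk2]
  have hb1' : 1 < b^2 := by
    rw [hbsq]; nlinarith [hb1]
  have hb2' : b^2 < 1 + Real.sqrt γ := by
    rw [hbsq]
    calc (k*b)^2 < Real.sqrt (1 + Real.sqrt γ) ^ 2 := by nlinarith [hb1, hb2]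
      _ = 1 + Real.sqrt γ := hroot2
  -- f(b) bounds
  have hfb : (b^2 - 1)^2 < γ := by nlinarith [hb1', hb2', hsγ2, hsγpos]
  have hfb_ub : b^4/4 - b^2/2 < (γ - 1)/4 := by nlinarith [hfb]
  have hfb_lb : -1/4 < b^4/4 - b^2/2 := by nlinarith [hb1']
  -- energy conservation
  have hEd : ∀ φ : ℝ, HasDerivAt
      (fun φ => ((C φ)^4/4 - (C φ)^2/2) + γ * ((S φ)^4/4 - (S φ)^2/2)) 0 φ := by
    intro φ
    have h1 := (((hC φ).pow 4).div_const 4).sub (((hC φ).pow 2).div_const 2)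
    have h2 := ((((hS φ).pow 4).div_const 4).sub (((hS φ).pow 2).div_const 2)).const_mul γ
    have h3 := h1.add h2
    refine h3.congr_deriv ?_
    norm_num
    ring
  have hEconst : ∀ φ : ℝ,
      ((C φ)^4/4 - (C φ)^2/2) + γ * ((S φ)^4/4 - (S φ)^2/2)
        = (b^4/4 - b^2/2) - γ/4 := by
    intro φ
    have hconst := is_const_of_deriv_eq_zero
      (f := fun φ => ((C φ)^4/4 - (C φ)^2/2) + γ * ((S φ)^4/4 - (S φ)^2/2))
      (fun x => (hEd x).differentiableAt) (fun x => (hEd x).deriv) φ 0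
    have h0 : ((C 0)^4/4 - (C 0)^2/2) + γ * ((S 0)^4/4 - (S 0)^2/2)
        = (b^4/4 - b^2/2) - γ/4 := by
      rw [hC0, hS0]
      have hl4 : l^4 = 1 := by nlinarith [hl2]
      rw [hl4, hl2]; ring
    simpa [h0] using hconst
  -- C never vanishes
  have hCne : ∀ φ, C φ ≠ 0 := by
    intro φ h
    have e := hEconst φ
    rw [h] at e
    norm_num at e
    nlinarith [e, mul_nonneg hγ0.le (sq_nonneg ((S φ)^2 - 1)), hfb_ub, hγ1]
  -- S never vanishes
  have hSne : ∀ φ, S φ ≠ 0 := by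
    intro φ h
    have e := hEconst φ
    rw [h] at e
    norm_num at e
    nlinarith [e, sq_nonneg ((C φ)^2 - 1), hfb_ub]
  -- continuity
  have hCcont : Continuous C :=
    continuous_iff_continuousAt.mpr (fun φ => (hC φ).continuousAt)
  have hScont : Continuous S :=
    continuous_iff_continuousAt.mpr (fun φ => (hS φ).continuousAt)
  -- sign preservation
  have hkC : ∀ φ, 0 < k * C φ := by
    apply sign_keep _ (continuous_const.mul hCcont)
    · show 0 < k * C 0; rw [hC0]; linarith [hb1]
    · intro x; exact mul_ne_zero hk0 (hCne x)
  have hlS : ∀ φ, 0 < l * S φ := by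
    apply sign_keep _ (continuous_const.mul hScont)
    · show 0 < l * S 0; rw [hS0]; nlinarith [hl2]
    · intro x; exact mul_ne_zero hl0 (hSne x)
  -- not at equilibrium
  have hneq : ∀ φ, ¬ (C φ = k ∧ S φ = l) := by
    rintro φ ⟨h1, h2⟩
    have e := hEconst φ
    rw [h1, h2] at e
    have hk4 : k^4 = 1 := by nlinarith [hk2]
    have hl4 : l^4 = 1 := by nlinarith [hl2]
    rw [hk4, hk2, hl4, hl2] at e
    nlinarith [e, hfb_lb]
  -- conclude
  intro φ
  rw [(hC φ).deriv, (hS φ).deriv]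
  have hterm_s : 0 ≤ (S φ - l) * ((S φ)^3 - S φ) := term_nonneg l (S φ) hl (hlS φ)
  have hterm_c : 0 ≤ (C φ - k) * ((C φ)^3 - C φ) := term_nonneg k (C φ) hk (hkC φ)
  by_cases hck : C φ = k
  · have hsl : S φ ≠ l := fun h => hneq φ ⟨hck, h⟩
    have hs : 0 < (S φ - l) * ((S φ)^3 - S φ) := term_pos l (S φ) hl (hlS φ) hsl
    nlinarith [mul_pos hγ0 hs, hterm_c]
  · have hc : 0 < (C φ - k) * ((C φ)^3 - C φ) := term_pos k (C φ) hk (hkC φ) hck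
    nlinarith [hc, mul_nonneg hγ0.le hterm_s]
end

section
/- Let γ ∈ (0,1], let (k,l,b) be admissible initial data, let (C,S) be the corresponding nonconstant periodic solution of the unperturbed system with C(0) = b, S(0) = l and minimal period ω, and assume that α(φ) = C'(φ)(S(φ) − l) − (C(φ) − k)S'(φ) does not vanish on ℝ. Define q(φ) = α(φ)^{−2}((C−k)³(2C+k) + γ(S−l)³(2S+l)), p(φ) = 3γ α(φ)^{−1} C S ((S² − 1)(C − k)² − (C² − 1)(S − l)²), and ξ(φ) = α(φ)^{−1}(α'(φ) q(φ) − p(φ)). Then ∫₀^ω ξ(φ) dφ = 0. -/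
/-- Auxiliary polynomial `P(c,s)` such that `P(C,S)/α²` is an antiderivative of `ξ`. -/
noncomputable def mxvP (γ k l c s : ℝ) : ℝ :=
  -(3/2) * ((c - k) ^ 3 * (c + k)) + (1 - 3 * k ^ 2) / 2 * (c - k) ^ 2
  + γ * (-(3/2) * ((s - l) ^ 3 * (s + l)) + (1 - 3 * l ^ 2) / 2 * (s - l) ^ 2)

/-- Derivative of `φ ↦ mxvP γ k l (C φ) (S φ)` along the flow. -/
noncomputable def mxvDP (γ k l c s : ℝ) : ℝ :=
  (-(3/2) * (3 * (c - k) ^ 2 * (c + k) + (c - k) ^ 3) + (1 - 3 * k ^ 2) * (c - k))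
      * (γ * (s ^ 3 - s))
  + γ * (-(3/2) * (3 * (s - l) ^ 2 * (s + l) + (s - l) ^ 3) + (1 - 3 * l ^ 2) * (s - l))
      * (-(c ^ 3 - c))

/-- `α` expressed as a polynomial in `(c,s)`. -/
noncomputable def mxvA (γ k l c s : ℝ) : ℝ :=
  γ * (s ^ 3 - s) * (s - l) + (c - k) * (c ^ 3 - c)

/-- Derivative of `φ ↦ mxvA γ k l (C φ) (S φ)` along the flow. -/
noncomputable def mxvDA (γ k l c s : ℝ) : ℝ :=
  ((c ^ 3 - c) + (c - k) * (3 * c ^ 2 - 1)) * (γ * (s ^ 3 - s))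
  + (γ * (3 * s ^ 2 - 1) * (s - l) + γ * (s ^ 3 - s)) * (-(c ^ 3 - c))

/-- The key polynomial identity, valid when `k³ = k` and `l³ = l`. -/
lemma mxv_polyid (γ k l c s : ℝ) (hk : k ^ 3 = k) (hl : l ^ 3 = l) :
    mxvDP γ k l c s * mxvA γ k l c s - 2 * mxvDA γ k l c s * mxvP γ k l c s
    = mxvDA γ k l c s *
        ((c - k) ^ 3 * (2 * c + k) + γ * (s - l) ^ 3 * (2 * s + l))
      - mxvA γ k l c s *
        (3 * γ * (c * s * ((s ^ 2 - 1) * (c - k) ^ 2 - (c ^ 2 - 1) * (s - l) ^ 2))) := by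
  have hk' : k * (k - 1) * (k + 1) = 0 := by linear_combination hk
  have hl' : l * (l - 1) * (l + 1) = 0 := by linear_combination hl
  have hk3 : k = 0 ∨ k = 1 ∨ k = -1 := by
    rcases mul_eq_zero.1 hk' with h | h
    · rcases mul_eq_zero.1 h with h | h
      · exact Or.inl h
      · exact Or.inr (Or.inl (by linarith))
    · exact Or.inr (Or.inr (by linarith))
  have hl3 : l = 0 ∨ l = 1 ∨ l = -1 := by
    rcases mul_eq_zero.1 hl' with h | h
    · rcases mul_eq_zero.1 h with h | h
      · exact Or.inl h
      · exact Or.inr (Or.inl (by linarith))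
    · exact Or.inr (Or.inr (by linarith))
  unfold mxvDP mxvA mxvDA mxvP
  rcases hk3 with rfl | rfl | rfl <;> rcases hl3 with rfl | rfl | rfl <;> ring

/-- the mean value over the period of
`ξ = α⁻¹(α'q − p)` vanishes, where `α, q, p` are built along a nonconstant
periodic solution parametrizing a cycle with admissible initial data. -/
theorem mean_of_xi_vanishes
    (γ : ℝ) (hγ : γ ∈ Set.Ioc (0 : ℝ) 1)
    (k l b : ℝ)
    (hadm :
      (k = 0 ∧ l = 0 ∧ b ∈ Set.Ioo 0 (Real.sqrt (1 - Real.sqrt (1 - γ))) ∪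
        Set.Ioi (Real.sqrt (1 + Real.sqrt (1 - γ)))) ∨
      (l = 0 ∧ (k = -1 ∨ k = 1) ∧
        k * b ∈ Set.Ioo 1 (Real.sqrt (1 + Real.sqrt (1 - γ)))) ∨
      ((k = -1 ∨ k = 1) ∧ (l = -1 ∨ l = 1) ∧
        k * b ∈ Set.Ioo 1 (Real.sqrt (1 + Real.sqrt γ))))
    (C S : ℝ → ℝ) (ω : ℝ) (hω : 0 < ω)
    (hC : ∀ φ : ℝ, HasDerivAt C (γ * (S φ ^ 3 - S φ)) φ)
    (hS : ∀ φ : ℝ, HasDerivAt S (-(C φ ^ 3 - C φ)) φ)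
    (hC0 : C 0 = b) (hS0 : S 0 = l)
    (hper : ∀ φ : ℝ, C (φ + ω) = C φ ∧ S (φ + ω) = S φ)
    (hmin : ∀ ω' : ℝ, 0 < ω' → (∀ φ : ℝ, C (φ + ω') = C φ ∧ S (φ + ω') = S φ) → ω ≤ ω')
    (hnc : ∃ φ₁ φ₂ : ℝ, (C φ₁, S φ₁) ≠ (C φ₂, S φ₂))
    (α q p ξ : ℝ → ℝ)
    (hα : ∀ φ, α φ = deriv C φ * (S φ - l) - (C φ - k) * deriv S φ)
    (hαne : ∀ φ, α φ ≠ 0)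
    (hq : ∀ φ, q φ =
      ((C φ - k) ^ 3 * (2 * C φ + k) + γ * (S φ - l) ^ 3 * (2 * S φ + l)) / α φ ^ 2)
    (hp : ∀ φ, p φ = 3 * γ * (C φ * S φ *
      ((S φ ^ 2 - 1) * (C φ - k) ^ 2 - (C φ ^ 2 - 1) * (S φ - l) ^ 2)) / α φ)
    (hξ : ∀ φ, ξ φ = (deriv α φ * q φ - p φ) / α φ) :
    ∫ φ in (0:ℝ)..ω, ξ φ = 0 := by
  -- k and l are cube roots of themselves
  have hkl : k ^ 3 = k ∧ l ^ 3 = l := by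
    obtain ⟨rfl, rfl, -⟩ | ⟨rfl, hk1, -⟩ | ⟨hk1, hl1, -⟩ := hadm
    · norm_num
    · rcases hk1 with rfl | rfl <;> norm_num
    · rcases hk1 with rfl | rfl <;> rcases hl1 with rfl | rfl <;> norm_num
  obtain ⟨hk, hl⟩ := hkl
  have hCc : Continuous C := by
    rw [continuous_iff_continuousAt]; exact fun φ => (hC φ).continuousAt
  have hSc : Continuous S := by
    rw [continuous_iff_continuousAt]; exact fun φ => (hS φ).continuousAt
  have hdC : ∀ φ, deriv C φ = γ * (S φ ^ 3 - S φ) := fun φ => (hC φ).deriv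
  have hdS : ∀ φ, deriv S φ = -(C φ ^ 3 - C φ) := fun φ => (hS φ).deriv
  have hαeq : ∀ φ, α φ = mxvA γ k l (C φ) (S φ) := by
    intro φ; rw [hα, hdC, hdS]; unfold mxvA; ring
  -- derivative of α
  have hαd : ∀ φ, HasDerivAt α (mxvDA γ k l (C φ) (S φ)) φ := by
    intro φ
    have hfun : α = fun ψ => mxvA γ k l (C ψ) (S ψ) := funext hαeq
    rw [hfun]
    have hc := hC φ; have hs := hS φ
    have H := ((((hs.pow 3).sub hs).const_mul γ).mul (hs.sub_const l)).add
      ((hc.sub_const k).mul ((hc.pow 3).sub hc))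
    refine H.congr_deriv ?_
    unfold mxvDA; simp only [Pi.pow_apply, Pi.sub_apply]; push_cast; ring
  have hdα : ∀ φ, deriv α φ = mxvDA γ k l (C φ) (S φ) := fun φ => (hαd φ).deriv
  -- derivative of P along the flow
  have hPd : ∀ φ, HasDerivAt (fun ψ => mxvP γ k l (C ψ) (S ψ))
      (mxvDP γ k l (C φ) (S φ)) φ := by
    intro φ
    have hc := hC φ; have hs := hS φ
    have H := (((((hc.sub_const k).pow 3).mul (hc.add_const k)).const_mul (-(3/2))).add
        ((((hc.sub_const k).pow 2)).const_mul ((1 - 3 * k ^ 2) / 2))).add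
      ((((((hs.sub_const l).pow 3).mul (hs.add_const l)).const_mul (-(3/2))).add
        ((((hs.sub_const l).pow 2)).const_mul ((1 - 3 * l ^ 2) / 2))).const_mul γ)
    simp only [mxvP]
    refine H.congr_deriv ?_
    simp only [mxvDP]; simp only [Pi.pow_apply, Pi.sub_apply]; push_cast; ring
  -- the antiderivative F = P / α²
  have hFd : ∀ φ, HasDerivAt (fun ψ => mxvP γ k l (C ψ) (S ψ) / α ψ ^ 2) (ξ φ) φ := by
    intro φ
    have hd := (hPd φ).div ((hαd φ).pow 2) (pow_ne_zero 2 (hαne φ))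
    have key : ξ φ = (mxvDP γ k l (C φ) (S φ) * α φ ^ 2 -
        mxvP γ k l (C φ) (S φ) * ((2 : ℕ) * α φ ^ (2 - 1) * mxvDA γ k l (C φ) (S φ)))
        / (α φ ^ 2) ^ 2 := by
      have hne := hαne φ
      rw [hξ, hq, hp, hdα]
      rw [div_eq_div_iff hne (pow_ne_zero 2 (pow_ne_zero 2 hne))]
      have := mxv_polyid γ k l (C φ) (S φ) hk hl
      rw [← hαeq φ] at this
      push_cast
      field_simp
      linear_combination (-1) * this
    rw [key]
    exact hd
  -- continuity of ξ
  have hαc : Continuous α := by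
    have hfun : α = fun ψ => mxvA γ k l (C ψ) (S ψ) := funext hαeq
    rw [hfun]; unfold mxvA; fun_prop
  have hξc : Continuous ξ := by
    have hfun : ξ = fun φ => (deriv α φ * q φ - p φ) / α φ := funext hξ
    have hqfun : q = fun φ =>
        ((C φ - k) ^ 3 * (2 * C φ + k) + γ * (S φ - l) ^ 3 * (2 * S φ + l)) / α φ ^ 2 :=
      funext hq
    have hpfun : p = fun φ => 3 * γ * (C φ * S φ *
        ((S φ ^ 2 - 1) * (C φ - k) ^ 2 - (C φ ^ 2 - 1) * (S φ - l) ^ 2)) / α φ :=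
      funext hp
    have hdαfun : deriv α = fun φ => mxvDA γ k l (C φ) (S φ) := funext hdα
    rw [hfun, hqfun, hpfun, hdαfun]
    unfold mxvDA
    apply Continuous.div _ hαc hαne
    apply Continuous.sub
    · apply Continuous.mul (by fun_prop)
      exact Continuous.div (by fun_prop) (hαc.pow 2) fun φ => pow_ne_zero 2 (hαne φ)
    · exact Continuous.div (by fun_prop) hαc hαne
  -- fundamental theorem of calculus
  have hint : IntervalIntegrable ξ MeasureTheory.volume 0 ω :=
    hξc.intervalIntegrable 0 ω
  have hftc := intervalIntegral.integral_eq_sub_of_hasDerivAt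
    (f := fun ψ => mxvP γ k l (C ψ) (S ψ) / α ψ ^ 2)
    (fun φ _ => hFd φ) hint
  rw [hftc]
  have hCp : C ω = C 0 := by simpa using (hper 0).1
  have hSp : S ω = S 0 := by simpa using (hper 0).2
  simp only [hαeq, hCp, hSp, sub_self]
end

section
/- Let ω, T, ϑ > 0 and τ ≥ 1 satisfy the Siegel condition |mω + nT| > ϑ(|m| + |n|)^{−τ} for all (m,n) ∈ ℤ² with (m,n) ≠ (0,0). Then for every nonzero integer n, |1 − e^{−2πinT/ω}| > 4ϑω^{−1}((T/ω + 2)|n|)^{−τ}. -/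
open Real

lemma abs_one_sub_exp_mul_I (θ : ℝ) :
    ‖1 - Complex.exp (θ * Complex.I)‖ = 2 * |Real.sin (θ / 2)| := by
  rw [Complex.exp_mul_I]
  have hre : (1 - (Complex.cos θ + Complex.sin θ * Complex.I)).re = 1 - Real.cos θ := by
    simp [Complex.cos_ofReal_re, Complex.sin_ofReal_im]
  have him : (1 - (Complex.cos θ + Complex.sin θ * Complex.I)).im = -Real.sin θ := by
    simp [Complex.sin_ofReal_re, Complex.cos_ofReal_im]
  rw [Complex.norm_def, Complex.normSq_apply, hre, him]
  have h3 : Real.cos θ = 1 - 2 * Real.sin (θ / 2) ^ 2 := by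
    have h := Real.cos_two_mul (θ / 2)
    have hθ : 2 * (θ / 2) = θ := by ring
    rw [hθ] at h
    nlinarith [Real.sin_sq_add_cos_sq (θ / 2)]
  have key : (1 - Real.cos θ) * (1 - Real.cos θ) + -Real.sin θ * -Real.sin θ
      = (2 * |Real.sin (θ / 2)|) ^ 2 := by
    have h1 := Real.sin_sq_add_cos_sq θ
    have h4 : |Real.sin (θ / 2)| ^ 2 = Real.sin (θ / 2) ^ 2 := sq_abs _
    nlinarith
  rw [key, Real.sqrt_sq (by positivity)]

/-- under the Siegel condition on the periods `ω` and `T`, the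
small divisor `d_n = 1 − e^{−2πinT/ω}` satisfies
`|d_n| > 4ϑω⁻¹((T/ω + 2)|n|)^{−τ}` for every nonzero integer `n`. -/
theorem small_divisor_lower_bound
    (ω T ϑ τ : ℝ) (hω : 0 < ω) (hT : 0 < T) (hϑ : 0 < ϑ) (hτ : 1 ≤ τ)
    (hsiegel : ∀ m n : ℤ, ¬(m = 0 ∧ n = 0) →
      ϑ * (((|m| + |n| : ℤ) : ℝ)) ^ (-τ) < |(m : ℝ) * ω + (n : ℝ) * T|) :
    ∀ n : ℤ, n ≠ 0 →
      4 * ϑ * ω⁻¹ * ((T / ω + 2) * ((|n| : ℤ) : ℝ)) ^ (-τ) <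
        ‖(1 - Complex.exp (-(2 * Real.pi * Complex.I * (n : ℂ) * (T : ℂ)) / (ω : ℂ)))‖ := by
  intro n hn
  set x : ℝ := n * T / ω with hx
  have hω' : (ω : ℂ) ≠ 0 := by exact_mod_cast hω.ne'
  have harg : -(2 * Real.pi * Complex.I * (n : ℂ) * (T : ℂ)) / (ω : ℂ)
      = ((-(2 * Real.pi * x) : ℝ) : ℂ) * Complex.I := by
    rw [hx, div_eq_iff hω']
    push_cast
    field_simp
  rw [harg, abs_one_sub_exp_mul_I]
  have hsin : |Real.sin (-(2 * Real.pi * x) / 2)| = |Real.sin (Real.pi * x)| := by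
    have h : -(2 * Real.pi * x) / 2 = -(Real.pi * x) := by ring
    rw [h, Real.sin_neg, abs_neg]
  rw [hsin]
  set m : ℤ := -round x with hm
  have hclose : |x + m| ≤ 1 / 2 := by
    have := abs_sub_round x
    simpa [hm, sub_eq_add_neg] using this
  have hshift : |Real.sin (Real.pi * x)| = |Real.sin (Real.pi * (x + m))| := by
    have h : Real.pi * (x + m) = Real.pi * x + m * Real.pi := by ring
    rw [h, Real.sin_add_int_mul_pi, abs_mul]
    have h2 : |((-1 : ℝ)) ^ m| = 1 := by
      rcases Int.even_or_odd m with he | ho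
      · rw [he.neg_one_zpow, abs_one]
      · rw [Odd.neg_one_zpow ho, abs_neg, abs_one]
    rw [h2, one_mul]
  rw [hshift]
  have hjordan : 2 / Real.pi * |Real.pi * (x + m)| ≤ |Real.sin (Real.pi * (x + m))| := by
    apply Real.mul_abs_le_abs_sin
    rw [abs_mul, abs_of_pos Real.pi_pos]
    calc Real.pi * |x + m| ≤ Real.pi * (1 / 2) :=
          mul_le_mul_of_nonneg_left hclose Real.pi_pos.le
      _ = Real.pi / 2 := by ring
  have hjordan' : 4 * |x + m| ≤ 2 * |Real.sin (Real.pi * (x + m))| := by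
    have h : 2 / Real.pi * |Real.pi * (x + m)| = 2 * |x + m| := by
      rw [abs_mul, abs_of_pos Real.pi_pos]
      field_simp
    nlinarith [hjordan]
  have hmn : ¬(m = 0 ∧ n = 0) := fun h => hn h.2
  have hsieg := hsiegel m n hmn
  have hid : |(m : ℝ) * ω + (n : ℝ) * T| = ω * |x + m| := by
    have h : (m : ℝ) * ω + (n : ℝ) * T = ω * (x + m) := by
      rw [hx]; field_simp; ring
    rw [h, abs_mul, abs_of_pos hω]
  have hnpos : (1 : ℤ) ≤ |n| := Int.one_le_abs hn
  have hApos : (0 : ℝ) < ((|m| + |n| : ℤ) : ℝ) := by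
    have h : (1 : ℤ) ≤ |m| + |n| := le_add_of_nonneg_of_le (abs_nonneg m) hnpos
    exact_mod_cast lt_of_lt_of_le zero_lt_one (by exact_mod_cast h)
  have hn1 : (1 : ℝ) ≤ |(n : ℝ)| := by
    rw [← Int.cast_abs]; exact_mod_cast hnpos
  have hmbound : |(m : ℝ)| ≤ |(n : ℝ)| * (T / ω) + 1 := by
    have h1 : |(m : ℝ)| = |(round x : ℝ)| := by rw [hm]; push_cast; rw [abs_neg]
    have h2 : |(round x : ℝ)| ≤ |x| + 1 / 2 := by
      have h3 : |(round x : ℝ)| - |x| ≤ |(round x : ℝ) - x| := abs_sub_abs_le_abs_sub _ _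
      have h4 : |(round x : ℝ) - x| ≤ 1 / 2 := by rw [abs_sub_comm]; exact abs_sub_round x
      linarith
    have h5 : |x| = |(n : ℝ)| * (T / ω) := by
      rw [hx, abs_div, abs_mul, abs_of_pos hω, abs_of_pos hT]; ring
    rw [h1]
    calc |(round x : ℝ)| ≤ |x| + 1 / 2 := h2
      _ = |(n : ℝ)| * (T / ω) + 1 / 2 := by rw [h5]
      _ ≤ |(n : ℝ)| * (T / ω) + 1 := by linarith
  have hAB : ((|m| + |n| : ℤ) : ℝ) ≤ (T / ω + 2) * ((|n| : ℤ) : ℝ) := by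
    push_cast
    nlinarith
  have hrpow : ((T / ω + 2) * ((|n| : ℤ) : ℝ)) ^ (-τ) ≤ ((|m| + |n| : ℤ) : ℝ) ^ (-τ) :=
    Real.rpow_le_rpow_of_nonpos hApos hAB (by linarith)
  have hchain : 4 * ϑ * ω⁻¹ * ((T / ω + 2) * ((|n| : ℤ) : ℝ)) ^ (-τ)
      ≤ 4 * ω⁻¹ * (ϑ * ((|m| + |n| : ℤ) : ℝ) ^ (-τ)) := by
    have h4 : (0 : ℝ) < 4 * ϑ * ω⁻¹ := by positivity
    nlinarith [mul_le_mul_of_nonneg_left hrpow h4.le]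
  have hstrict : 4 * ω⁻¹ * (ϑ * ((|m| + |n| : ℤ) : ℝ) ^ (-τ)) < 4 * ω⁻¹ * (ω * |x + m|) := by
    apply mul_lt_mul_of_pos_left _ (by positivity)
    rw [← hid]; exact hsieg
  have hfinal : 4 * ω⁻¹ * (ω * |x + m|) = 4 * |x + m| := by
    field_simp
  calc 4 * ϑ * ω⁻¹ * ((T / ω + 2) * ((|n| : ℤ) : ℝ)) ^ (-τ)
      ≤ 4 * ω⁻¹ * (ϑ * ((|m| + |n| : ℤ) : ℝ) ^ (-τ)) := hchain
    _ < 4 * ω⁻¹ * (ω * |x + m|) := hstrict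
    _ = 4 * |x + m| := hfinal
    _ ≤ 2 * |Real.sin (Real.pi * (x + m))| := hjordan'
end
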